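/- arXiv:math/0509122 — 9 statements merged into one kernel-verified Lean document; each statement's English description precedes it below -/
import Mathlib

section
/- Let A = ⊕_{n∈ℕ} A_{(n)} be an ℕ-graded vertex Lie algebra. Then the pair (A_{(0)}, A_{(1)}) with map ∂: A_{(0)} → A_{(1)} and the restricted operations u_0, u_1 forms a 1-truncated conformal algebra; that is, the identities (∂a)_0 = 0, (∂a)_1 = -a_0, ∂(u_0 a) = u_0 ∂a, u_0 a = -a_0 u, u_0 v = -v_0 u + ∂(v_1 u), u_1 v = v_1 u, and α_0 β_i γ = β_i α_0 γ + (α_0 β)_i γ hold for a ∈ A_{(0)}, u, v ∈ A_{(1)}, α, β, γ ∈ A_{(0)} ⊕ A_{(1)}, i = 0, 1. -/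
open scoped BigOperators

noncomputable section

/-- A vertex Lie algebra over `ℂ`, in component form: `Y₋(a,x) = ∑ₙ (op n a) x^{-n-1}`,
with `d = ∂`. The axioms are truncation, `Y₋(∂a,x) = (d/dx)Y₋(a,x)` (in components
`(∂a)ₙ b = -n a_{n-1} b`), half skew symmetry and the half commutator formula. -/
structure VertexLie (A : Type) [AddCommGroup A] [Module ℂ A] where
  d : A →ₗ[ℂ] A
  op : ℕ → A →ₗ[ℂ] A →ₗ[ℂ] A
  trunc : ∀ a b : A, ∃ N : ℕ, ∀ n ≥ N, op n a b = 0
  op_d_zero : ∀ a b : A, op 0 (d a) b = 0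
  op_d : ∀ (a b : A) (n : ℕ), op (n + 1) (d a) b = (-(n + 1 : ℂ)) • op n a b
  skew : ∀ (a b : A) (n N : ℕ), (∀ i ≥ N, op (n + i) b a = 0) →
    op n a b = ∑ i ∈ Finset.range N,
      ((-1 : ℂ) ^ (n + i + 1) * ((Nat.factorial i : ℂ))⁻¹) • (⇑d)^[i] (op (n + i) b a)
  half_comm : ∀ (a b c : A) (m n : ℕ),
    op m a (op n b c) - op n b (op m a c)
      = ∑ i ∈ Finset.range (m + 1), ((Nat.choose m i : ℂ)) • op (m + n - i) (op i a b) c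

/-- An `ℕ`-graded vertex Lie algebra. -/
structure NGradedVertexLie (A : Type) [AddCommGroup A] [Module ℂ A]
    extends VertexLie A where
  gr : ℕ → Submodule ℂ A
  internal : DirectSum.IsInternal gr
  d_mem : ∀ {r : ℕ} {a : A}, a ∈ gr r → d a ∈ gr (r + 1)
  op_mem : ∀ {n r : ℕ} {a b : A} (m : ℕ), a ∈ gr n → b ∈ gr r →
    m + 1 ≤ n + r → op m a b ∈ gr (n + r - m - 1)
  op_gr_zero : ∀ {n r : ℕ} {a b : A} (m : ℕ), a ∈ gr n → b ∈ gr r →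
    n + r < m + 1 → op m a b = 0

/-- For an `ℕ`-graded vertex Lie algebra `A`, the pair `(A₍₀₎, A₍₁₎)` with
`∂ : A₍₀₎ → A₍₁₎` and the restricted operations `u₀, u₁` forms a 1-truncated
conformal algebra: the derivation, commutativity and associativity identities hold. -/
theorem stmt5 {A : Type} [AddCommGroup A] [Module ℂ A] (G : NGradedVertexLie A) :
    (∀ a ∈ G.gr 0, ∀ w ∈ G.gr 0 ⊔ G.gr 1,
      G.op 0 (G.d a) w = 0 ∧ G.op 1 (G.d a) w = - G.op 0 a w) ∧
    (∀ u ∈ G.gr 1, ∀ a ∈ G.gr 0, G.d (G.op 0 u a) = G.op 0 u (G.d a)) ∧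
    (∀ u ∈ G.gr 1, ∀ a ∈ G.gr 0, G.op 0 u a = - G.op 0 a u) ∧
    (∀ u ∈ G.gr 1, ∀ v ∈ G.gr 1, G.op 0 u v = - G.op 0 v u + G.d (G.op 1 v u)) ∧
    (∀ u ∈ G.gr 1, ∀ v ∈ G.gr 1, G.op 1 u v = G.op 1 v u) ∧
    (∀ α ∈ G.gr 0 ⊔ G.gr 1, ∀ β ∈ G.gr 0 ⊔ G.gr 1, ∀ γ ∈ G.gr 0 ⊔ G.gr 1,
      ∀ i ≤ 1, G.op 0 α (G.op i β γ) = G.op i β (G.op 0 α γ) + G.op i (G.op 0 α β) γ) := by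
  have hz01 : ∀ a ∈ G.gr 0, ∀ u ∈ G.gr 1, ∀ i, 1 ≤ i → G.op i a u = 0 := by
    intro a ha u hu i hi
    exact G.op_gr_zero i ha hu (by omega)
  have hz11 : ∀ u ∈ G.gr 1, ∀ v ∈ G.gr 1, ∀ i, 2 ≤ i → G.op i v u = 0 := by
    intro u hu v hv i hi
    exact G.op_gr_zero i hv hu (by omega)
  have comm3 : ∀ u ∈ G.gr 1, ∀ a ∈ G.gr 0, G.op 0 u a = - G.op 0 a u := by
    intro u hu a ha
    have h := G.skew u a 0 1 (fun i hi => hz01 a ha u hu (0 + i) (by omega))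
    simpa [Finset.sum_range_one] using h
  refine ⟨?_, ?_, comm3, ?_, ?_, ?_⟩
  · intro a _ w _
    refine ⟨G.op_d_zero a w, ?_⟩
    simpa using G.op_d a w 0
  · intro u hu a ha
    have h := G.skew u (G.d a) 0 2 ?_
    · rw [comm3 u hu a ha, h]
      have h1 : G.op 1 (G.d a) u = (-(1:ℂ)) • G.op 0 a u := by simpa using G.op_d a u 0
      simp [Finset.sum_range_succ, G.op_d_zero, h1]
    · intro i hi
      obtain ⟨n, rfl⟩ : ∃ n, i = n + 1 := ⟨i - 1, by omega⟩
      rw [show 0 + (n + 1) = n + 1 by omega, G.op_d, hz01 a ha u hu n (by omega), smul_zero]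
  · intro u hu v hv
    have h := G.skew u v 0 2 (fun i hi => hz11 u hu v hv (0 + i) (by omega))
    rw [h]
    simp [Finset.sum_range_succ]
  · intro u hu v hv
    have h := G.skew u v 1 1 (fun i hi => hz11 u hu v hv (1 + i) (by omega))
    rw [h]
    simp [Finset.sum_range_one]
  · intro α _ β _ γ _ i _
    have h := G.half_comm α β γ 0 i
    simp only [Finset.sum_range_one, Nat.choose_self, Nat.cast_one, one_smul,
      Nat.zero_add, Nat.sub_zero] at h
    rw [sub_eq_iff_eq_add'] at h
    simpa using h
end
end

section
/- A 1-truncated conformal algebra structure on C = C_0 ⊕ C_1 is equivalent to the following data: (C_1, [u,v] := u_0 v) is a Leibniz algebra; C_0 is a C_1-module via u·a = u_0 a; ∂: C_0 → C_1 is a C_1-module homomorphism; ∂C_0 annihilates the C_1-module C_0 ⊕ C_1; and the symmetric pairing ⟨u,v⟩ := u_1 v is a C_1-module homomorphism satisfying u_0 a = -a_0 u, ⟨∂a, u⟩ = -a_0 u, [u,v] + [v,u] = ∂⟨u,v⟩, ⟨u,v⟩ = ⟨v,u⟩ for a ∈ C_0, u,v ∈ C_1. -/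
open scoped BigOperators

noncomputable section

/-- The data of a 1-truncated conformal algebra on `C0 ⊕ C1`:
`d = ∂ : C0 → C1`, `β a u = a₀u`, `γ u a = u₀a`, `br u v = u₀v`, `pr u v = u₁v`
(all other operations vanish for degree reasons). -/
structure OneTruncData (C0 C1 : Type) [AddCommGroup C0] [Module ℂ C0]
    [AddCommGroup C1] [Module ℂ C1] where
  d : C0 →ₗ[ℂ] C1
  β : C0 →ₗ[ℂ] C1 →ₗ[ℂ] C0
  γ : C1 →ₗ[ℂ] C0 →ₗ[ℂ] C0
  br : C1 →ₗ[ℂ] C1 →ₗ[ℂ] C1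
  pr : C1 →ₗ[ℂ] C1 →ₗ[ℂ] C0

/-- The axioms of a 1-truncated conformal algebra (derivation, commutativity,
and all nontrivial typed instances of the associativity axiom `α₀βᵢγ = βᵢα₀γ + (α₀β)ᵢγ`). -/
def IsOneTruncated {C0 C1 : Type} [AddCommGroup C0] [Module ℂ C0]
    [AddCommGroup C1] [Module ℂ C1] (T : OneTruncData C0 C1) : Prop :=
  (∀ a a' : C0, T.γ (T.d a) a' = 0) ∧
  (∀ (a : C0) (u : C1), T.br (T.d a) u = 0) ∧
  (∀ (a : C0) (u : C1), T.pr (T.d a) u = - T.β a u) ∧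
  (∀ (u : C1) (a : C0), T.d (T.γ u a) = T.br u (T.d a)) ∧
  (∀ (u : C1) (a : C0), T.γ u a = - T.β a u) ∧
  (∀ u v : C1, T.br u v = - T.br v u + T.d (T.pr v u)) ∧
  (∀ u v : C1, T.pr u v = T.pr v u) ∧
  (∀ u v w : C1, T.br u (T.br v w) = T.br v (T.br u w) + T.br (T.br u v) w) ∧
  (∀ (u v : C1) (a : C0), T.γ u (T.γ v a) = T.γ v (T.γ u a) + T.γ (T.br u v) a) ∧
  (∀ (u : C1) (a : C0) (v : C1), T.γ u (T.β a v) = T.β a (T.br u v) + T.β (T.γ u a) v) ∧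
  (∀ (a : C0) (u v : C1), T.β a (T.br u v) = T.γ u (T.β a v) + T.β (T.β a u) v) ∧
  (∀ u v w : C1, T.γ u (T.pr v w) = T.pr v (T.br u w) + T.pr (T.br u v) w)

/-- The alternative description of a 1-truncated conformal algebra:
`(C1, br)` is a Leibniz algebra, `C0` is a `C1`-module via `γ`, `d` is a
`C1`-module homomorphism, `∂C0` annihilates the `C1`-module `C0 ⊕ C1`, the
symmetric pairing `pr` is a `C1`-module homomorphism, and the compatibility
relations `u₀a = -a₀u`, `⟨∂a,u⟩ = -a₀u`, `[u,v]+[v,u] = ∂⟨u,v⟩`, `⟨u,v⟩ = ⟨v,u⟩` hold. -/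
def LeibnizDescription {C0 C1 : Type} [AddCommGroup C0] [Module ℂ C0]
    [AddCommGroup C1] [Module ℂ C1] (T : OneTruncData C0 C1) : Prop :=
  (∀ u v w : C1, T.br u (T.br v w) = T.br (T.br u v) w + T.br v (T.br u w)) ∧
  (∀ (u v : C1) (a : C0), T.γ (T.br u v) a = T.γ u (T.γ v a) - T.γ v (T.γ u a)) ∧
  (∀ (u : C1) (a : C0), T.d (T.γ u a) = T.br u (T.d a)) ∧
  (∀ a a' : C0, T.γ (T.d a) a' = 0) ∧
  (∀ (a : C0) (u : C1), T.br (T.d a) u = 0) ∧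
  (∀ u v w : C1, T.γ u (T.pr v w) = T.pr (T.br u v) w + T.pr v (T.br u w)) ∧
  (∀ (u : C1) (a : C0), T.γ u a = - T.β a u) ∧
  (∀ (a : C0) (u : C1), T.pr (T.d a) u = - T.β a u) ∧
  (∀ u v : C1, T.br u v + T.br v u = T.d (T.pr u v)) ∧
  (∀ u v : C1, T.pr u v = T.pr v u)

/-- A 1-truncated conformal algebra structure on `C = C0 ⊕ C1` is equivalent to the
Leibniz-algebra/module description. -/
theorem stmt6 {C0 C1 : Type} [AddCommGroup C0] [Module ℂ C0]
    [AddCommGroup C1] [Module ℂ C1] (T : OneTruncData C0 C1) :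
    IsOneTruncated T ↔ LeibnizDescription T := by
  constructor
  · rintro ⟨h1, h2, h3, h4, h5, h6, h7, h8, h9, h10, h11, h12⟩
    refine ⟨fun u v w => ?_, fun u v a => ?_, h4, h1, h2, fun u v w => ?_, h5, h3,
      fun u v => ?_, h7⟩
    · rw [h8]; abel
    · rw [h9]; abel
    · rw [h12]; abel
    · rw [h6 u v, h7 v u]; abel
  · rintro ⟨l1, l2, l3, l4, l5, l6, l7, l8, l9, l10⟩
    have hb : ∀ (a : C0) (u : C1), T.β a u = - T.γ u a := by
      intro a u; rw [l7 u a]; abel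
    refine ⟨l4, l5, l8, l3, l7, fun u v => ?_, l10, fun u v w => ?_, fun u v a => ?_,
      fun u a v => ?_, fun a u v => ?_, fun u v w => ?_⟩
    · rw [l10 v u, ← l9 u v]; abel
    · rw [l1]; abel
    · rw [l2]; abel
    · simp only [hb, map_neg, LinearMap.neg_apply, l2]; abel
    · simp only [hb, map_neg, LinearMap.neg_apply, l2]; abel
    · rw [l6]; abel
end
end

section
/- Let A = ⊕_{n∈ℕ} A_{(n)} be an ℕ-graded vertex Poisson algebra. Then A_{(1)} is a Courant A_{(0)}-algebroid, with A_{(0)}-module structure from the product, bracket [u,v] = u_0 v, anchor π(u)(a) = u_0 a, pairing ⟨u,v⟩ = u_1 v, and derivation ∂: A_{(0)} → A_{(1)} the restriction of the differential. -/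
open scoped BigOperators

noncomputable section

/-- A vertex Poisson algebra: a differential commutative algebra with a compatible
vertex Lie algebra structure such that each `op n a` is a derivation of the product. -/
structure VertexPoisson (A : Type) [CommRing A] [Algebra ℂ A] extends VertexLie A where
  d_mul : ∀ a b : A, d (a * b) = a * d b + b * d a
  op_mul : ∀ (n : ℕ) (a b c : A), op n a (b * c) = op n a b * c + b * op n a c

/-- An `ℕ`-graded vertex Poisson algebra. -/
structure NGradedVertexPoisson (A : Type) [CommRing A] [Algebra ℂ A]
    extends VertexPoisson A where
  gr : ℕ → Submodule ℂ A
  internal : DirectSum.IsInternal gr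
  one_mem : (1 : A) ∈ gr 0
  mul_mem : ∀ {m n : ℕ} {a b : A}, a ∈ gr m → b ∈ gr n → a * b ∈ gr (m + n)
  d_mem : ∀ {r : ℕ} {a : A}, a ∈ gr r → d a ∈ gr (r + 1)
  op_mem : ∀ {n r : ℕ} {a b : A} (m : ℕ), a ∈ gr n → b ∈ gr r →
    m + 1 ≤ n + r → op m a b ∈ gr (n + r - m - 1)
  op_gr_zero : ∀ {n r : ℕ} {a b : A} (m : ℕ), a ∈ gr n → b ∈ gr r →
    n + r < m + 1 → op m a b = 0

section Aux

variable {A : Type} [CommRing A] [Algebra ℂ A] (G : NGradedVertexPoisson A)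

lemma sk10 {p q : A} (hp : p ∈ G.gr 1) (hq : q ∈ G.gr 0) :
    G.op 0 p q = - G.op 0 q p := by
  have h := G.skew p q 0 1 (fun i hi => G.op_gr_zero _ hq hp (by omega))
  simpa using h

lemma sk11 {p q : A} (hp : p ∈ G.gr 1) (hq : q ∈ G.gr 1) :
    G.op 1 p q = G.op 1 q p := by
  have h := G.skew p q 1 1 (fun i hi => G.op_gr_zero _ hq hp (by omega))
  simpa using h

lemma sk02 {p q : A} (hp : p ∈ G.gr 1) (hq : q ∈ G.gr 1) :
    G.op 0 p q = - G.op 0 q p + G.d (G.op 1 q p) := by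
  have h := G.skew p q 0 2 (fun i hi => G.op_gr_zero _ hq hp (by omega))
  rw [h]
  rw [Finset.sum_range_succ, Finset.sum_range_one]
  norm_num

end Aux

/-- For an `ℕ`-graded vertex Poisson algebra `A = ⊕ₙ A₍ₙ₎`, the degree-one subspace
`A₍₁₎` is a Courant `A₍₀₎`-algebroid, with module structure from the product,
bracket `[u,v] = u₀v`, anchor `π(u)(a) = u₀a`, pairing `⟨u,v⟩ = u₁v`,
and derivation the restriction of `∂`. -/
theorem stmt11 {A : Type} [CommRing A] [Algebra ℂ A] (G : NGradedVertexPoisson A) :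
    ∀ a ∈ G.gr 0, ∀ a' ∈ G.gr 0, ∀ u ∈ G.gr 1, ∀ v ∈ G.gr 1, ∀ w ∈ G.gr 1,
      -- closure of the operations:
      (G.op 0 u v ∈ G.gr 1 ∧ G.op 1 u v ∈ G.gr 0 ∧ G.op 0 u a ∈ G.gr 0 ∧
        G.d a ∈ G.gr 1 ∧ a * u ∈ G.gr 1) ∧
      -- Leibniz algebra:
      (G.op 0 u (G.op 0 v w) = G.op 0 (G.op 0 u v) w + G.op 0 v (G.op 0 u w)) ∧
      -- the anchor acts by derivations, is A₍₀₎-linear, and is a Leibniz homomorphism: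
      (G.op 0 u (a * a') = a * G.op 0 u a' + (G.op 0 u a) * a') ∧
      (G.op 0 (a * u) a' = a * G.op 0 u a') ∧
      (G.op 0 (G.op 0 u v) a = G.op 0 u (G.op 0 v a) - G.op 0 v (G.op 0 u a)) ∧
      -- the pairing is A₍₀₎-bilinear and symmetric:
      (G.op 1 (a * u) v = a * G.op 1 u v) ∧
      (G.op 1 u v = G.op 1 v u) ∧
      -- ∂ is a derivation with π ∘ ∂ = 0:
      (G.d (a * a') = a * G.d a' + a' * G.d a) ∧
      (G.op 0 (G.d a) a' = 0) ∧
      -- the five Courant axioms: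
      (G.op 0 u (a * v) = a * G.op 0 u v + (G.op 0 u a) * v) ∧
      (G.op 1 (G.op 0 u v) w + G.op 1 v (G.op 0 u w) = G.op 0 u (G.op 1 v w)) ∧
      (G.op 0 u (G.d a) = G.d (G.op 0 u a)) ∧
      (G.op 1 u (G.d a) = G.op 0 u a) ∧
      (G.op 0 u v + G.op 0 v u = G.d (G.op 1 u v)) := by
  intro a ha a' ha' u hu v hv w hw
  have oaa' : G.op 0 a' a = 0 := G.op_gr_zero 0 ha' ha (by omega)
  have ova : ∀ x ∈ G.gr 1, ∀ b ∈ G.gr 0, G.op 1 x b = 0 := fun x hx b hb =>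
    G.op_gr_zero 1 hx hb (by omega)
  have hc00 : ∀ x ∈ G.gr 1, ∀ y ∈ G.gr 1, ∀ z : A,
      G.op 0 x (G.op 0 y z) - G.op 0 y (G.op 0 x z) = G.op 0 (G.op 0 x y) z := by
    intro x hx y hy z
    have h := G.half_comm x y z 0 0
    simpa using h
  refine ⟨⟨?_, ?_, ?_, ?_, ?_⟩, ?_, ?_, ?_, ?_, ?_, ?_, ?_, ?_, ?_, ?_, ?_, ?_, ?_⟩
  · exact G.op_mem 0 hu hv (by omega)
  · exact G.op_mem 1 hu hv (by omega)
  · exact G.op_mem 0 hu ha (by omega)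
  · exact G.d_mem ha
  · exact G.mul_mem ha hu
  · have := hc00 u hu v hv w; linear_combination this
  · rw [G.op_mul]; ring
  · -- op 0 (a*u) a' = a * op 0 u a'
    rw [sk10 G (G.mul_mem ha hu) ha', G.op_mul, oaa', sk10 G hu ha']
    ring
  · have := hc00 u hu v hv a; linear_combination -this
  · -- op 1 (a*u) v = a * op 1 u v
    rw [sk11 G (G.mul_mem ha hu) hv, G.op_mul, ova v hv a ha, sk11 G hu hv]
    ring
  · exact sk11 G hu hv
  · rw [G.d_mul]
  · exact G.op_d_zero a a'
  · rw [G.op_mul]; ring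
  · have h := G.half_comm u v w 0 1
    norm_num at h
    linear_combination -h
  · -- op 0 u (d a) = d (op 0 u a)
    rw [sk02 G hu (G.d_mem ha), G.op_d_zero, G.op_d a u 0]
    have h1 : G.op 0 a u = - G.op 0 u a := by
      have := sk10 G hu ha; rw [this]; ring
    rw [h1]
    simp
  · rw [sk11 G hu (G.d_mem ha), G.op_d a u 0]
    have h1 : G.op 0 a u = - G.op 0 u a := by
      have := sk10 G hu ha; rw [this]; ring
    rw [h1]; simp
  · rw [sk02 G hu hv, sk11 G hv hu]; ring
end
end

section
/- Let A be an ℕ-graded vertex Poisson algebra. For a, a' ∈ A_{(0)} and u ∈ A_{(1)}, one has (au)_0 a' = a(u_0 a'), i.e., the bracket of degree-1 elements with degree-0 elements is A_{(0)}-linear in the first argument. -/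
open scoped BigOperators

noncomputable section

/-- In an `ℕ`-graded vertex Poisson algebra, for `a, a' ∈ A₍₀₎` and `u ∈ A₍₁₎` one has
`(au)₀a' = a(u₀a')`. -/
theorem stmt12 {A : Type} [CommRing A] [Algebra ℂ A] (G : NGradedVertexPoisson A) :
    ∀ a ∈ G.gr 0, ∀ a' ∈ G.gr 0, ∀ u ∈ G.gr 1,
      G.op 0 (a * u) a' = a * G.op 0 u a' := by

  intro a ha a' ha' u hu
  -- helper: for x ∈ gr 0, y ∈ gr 1, op 0 x y = - op 0 y x
  have key : ∀ x ∈ G.gr 0, ∀ y ∈ G.gr 1, G.op 0 x y = - G.op 0 y x := by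
    intro x hx y hy
    have h := G.skew x y 0 1 (by
      intro i hi
      exact G.op_gr_zero (0 + i) hy hx (by omega))
    simpa using h
  have hau : a * u ∈ G.gr 1 := by simpa using G.mul_mem ha hu
  have h1 : G.op 0 (a * u) a' = - G.op 0 a' (a * u) := by
    rw [key a' ha' (a * u) hau]; ring
  rw [h1, G.op_mul, G.op_gr_zero 0 ha' ha (by omega), key a' ha' u hu]
  ring
end
end

section
/- Let (𝔸 ⊕ 𝔹, ∂) be a 1-truncated conformal algebra, C(𝔸⊕𝔹) = ℂ[D] ⊗ (𝔸⊕𝔹) with the Y^0_- operations defined by Y^0_-(a,x)a' = 0, Y^0_-(a,x)b = a_0 b x^{-1}, Y^0_-(b,x)a = b_0 a x^{-1}, Y^0_-(b,x)b' = b_0 b' x^{-1} + b_1 b' x^{-2}, extended by the D-translation rules. Then the subspace ∂̂C(𝔸), where ∂̂ = 1⊗∂ − D⊗1 on ℂ[D]⊗𝔸, is a two-sided ideal of C(𝔸⊕𝔹) under the nonassociative products u_n. -/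
open scoped BigOperators

noncomputable section

section FullModel

variable {C0 C1 : Type} [AddCommGroup C0] [Module ℂ C0] [AddCommGroup C1] [Module ℂ C1]

/-- Model of `C(𝔸⊕𝔹) = ℂ[D] ⊗ (𝔸⊕𝔹)` as `(ℕ →₀ 𝔸) × (ℕ →₀ 𝔹)`,
where `Dⁿ⊗a = (single n a, 0)` and `Dⁿ⊗b = (0, single n b)`. -/
abbrev CF (C0 C1 : Type) [Zero C0] [Zero C1] := (ℕ →₀ C0) × (ℕ →₀ C1)

/-- `Dⁿ⊗a` for `a ∈ 𝔸`. -/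
def embFA : ℕ → C0 → CF C0 C1 := fun n a => (Finsupp.single n a, 0)

/-- `Dⁿ⊗b` for `b ∈ 𝔹`. -/
def embFB : ℕ → C1 → CF C0 C1 := fun n b => (0, Finsupp.single n b)

/-- The operator `D` on `C(𝔸⊕𝔹)`. -/
def DF : CF C0 C1 → CF C0 C1 :=
  fun x => (Finsupp.mapDomain (· + 1) x.1, Finsupp.mapDomain (· + 1) x.2)

/-- `op1 T i p n q` is the coefficient of `x^{-i-1}` in `Y⁰₋(p, x)(Dⁿ⊗q)` for a
generator `p = a + b ∈ 𝔸 ⊕ 𝔹`, using the defining formulas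
`Y⁰₋(a,x)a' = 0`, `Y⁰₋(a,x)b' = a₀b' x⁻¹`, `Y⁰₋(b,x)a' = b₀a' x⁻¹`,
`Y⁰₋(b,x)b' = b₀b' x⁻¹ + b₁b' x⁻²` and the translation rule
`Y⁰₋(u,x)Dⁿ⊗v = ∑ᵢ (n choose i)(-1)^{n-i} Dⁱ (d/dx)^{n-i} Y⁰₋(u,x)v`. -/
def op1 (T : OneTruncData C0 C1) (i : ℕ) (p : C0 × C1) (n : ℕ) (q : C0 × C1) : CF C0 C1 :=
  (if i ≤ n then ((n.factorial : ℂ) * (((n - i).factorial : ℂ))⁻¹) •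
      (embFA (n - i) (T.β p.1 q.2 + T.γ p.2 q.1) + embFB (n - i) (T.br p.2 q.2)) else 0)
  + (if 1 ≤ i ∧ i ≤ n + 1 then
      ((i : ℂ) * (n.factorial : ℂ) * (((n + 1 - i).factorial : ℂ))⁻¹) •
        embFA (n + 1 - i) (T.pr p.2 q.2) else 0)

/-- `opF T k s p n q` is the coefficient of `x^{-k-1}` in `Y⁰₋(Dˢ⊗p, x)(Dⁿ⊗q)`,
defined for `s ≥ 1` by the rule
`Y⁰₋(Dˢ⊗p, x)(Dⁿ⊗q) = Sing(e^{xD}(-d/dx)ⁿ Y⁰₋(q,-x)(Dˢ⊗p))`, whose coefficient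
of `x^{-k-1}` equals
`∑_{r, k+r ≥ n} (-1)^{k+r-n+1} (1/r!) ((k+r)!/(k+r-n)!) Dʳ (q_{k+r-n} (Dˢ⊗p))`. -/
def opF (T : OneTruncData C0 C1) (k s : ℕ) (p : C0 × C1) (n : ℕ) (q : C0 × C1) : CF C0 C1 :=
  if s = 0 then op1 T k p n q
  else ∑ r ∈ Finset.range (n + s + 2),
    if n ≤ k + r then
      ((-1 : ℂ) ^ (k + r + n + 1) * ((r.factorial : ℂ))⁻¹ *
        ((k + r).factorial : ℂ) * (((k + r - n).factorial : ℂ))⁻¹) •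
        (DF)^[r] (op1 T (k + r - n) q s p)
    else 0

/-- The subspace `∂̂C(𝔸)`, spanned by the elements `∂̂(Dᵐ⊗a) = Dᵐ⊗∂a - D^{m+1}⊗a`. -/
def IhatF (T : OneTruncData C0 C1) : Submodule ℂ (CF C0 C1) :=
  Submodule.span ℂ {x : CF C0 C1 | ∃ (m : ℕ) (a : C0), x = embFB m (T.d a) - embFA (m + 1) a}

end FullModel
namespace Stmt13Aux
set_option linter.unusedSectionVars false

def fC (m i : ℕ) : ℂ :=
  if i ≤ m then (m.factorial : ℂ) * (((m - i).factorial : ℂ))⁻¹ else 0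

def gC (m i : ℕ) : ℂ :=
  if 1 ≤ i ∧ i ≤ m + 1 then
    (i : ℂ) * (m.factorial : ℂ) * (((m + 1 - i).factorial : ℂ))⁻¹ else 0

def sgm (k r n : ℕ) : ℂ :=
  (-1 : ℂ) ^ (k + r + n + 1) * ((r.factorial : ℂ))⁻¹ *
    ((k + r).factorial : ℂ) * (((k + r - n).factorial : ℂ))⁻¹

section Vec

variable {C0 C1 : Type} [AddCommGroup C0] [Module ℂ C0] [AddCommGroup C1] [Module ℂ C1]

lemma embFA_zero (n : ℕ) : (embFA n (0 : C0) : CF C0 C1) = 0 := by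
  simp [embFA, Prod.ext_iff]

lemma embFB_zero (n : ℕ) : (embFB n (0 : C1) : CF C0 C1) = 0 := by
  simp [embFB, Prod.ext_iff]

lemma embFA_neg (n : ℕ) (a : C0) : (embFA n (-a) : CF C0 C1) = -embFA n a := by
  simp [embFA, Prod.ext_iff, Finsupp.single_neg]

lemma embFB_neg (n : ℕ) (b : C1) : (embFB n (-b) : CF C0 C1) = -embFB n b := by
  simp [embFB, Prod.ext_iff, Finsupp.single_neg]

lemma DF_embFA (n : ℕ) (a : C0) : DF (embFA n a : CF C0 C1) = embFA (n + 1) a := by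
  simp [DF, embFA, Finsupp.mapDomain_single]

lemma DF_embFB (n : ℕ) (b : C1) : DF (embFB n b : CF C0 C1) = embFB (n + 1) b := by
  simp [DF, embFB, Finsupp.mapDomain_single]

lemma DF_smul (c : ℂ) (x : CF C0 C1) : DF (c • x) = c • DF x := by
  simp [DF, Prod.ext_iff, Finsupp.mapDomain_smul]

lemma DF_add (x y : CF C0 C1) : DF (x + y) = DF x + DF y := by
  simp [DF, Prod.ext_iff, Finsupp.mapDomain_add]

lemma DF_zero : DF (0 : CF C0 C1) = 0 := by
  simp [DF, Prod.ext_iff]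

lemma DF_neg (x : CF C0 C1) : DF (-x) = -DF x := by
  rw [← neg_one_smul ℂ x, DF_smul, neg_one_smul]

lemma DF_iter_embFA (r n : ℕ) (a : C0) :
    DF^[r] (embFA n a : CF C0 C1) = embFA (n + r) a := by
  induction r generalizing n with
  | zero => rfl
  | succ r ih =>
      rw [Function.iterate_succ_apply, DF_embFA, ih]
      congr 1
      omega

lemma DF_iter_embFB (r n : ℕ) (b : C1) :
    DF^[r] (embFB n b : CF C0 C1) = embFB (n + r) b := by
  induction r generalizing n with
  | zero => rfl
  | succ r ih =>
      rw [Function.iterate_succ_apply, DF_embFB, ih]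
      congr 1
      omega

lemma DF_iter_smul (r : ℕ) (c : ℂ) (x : CF C0 C1) :
    DF^[r] (c • x) = c • DF^[r] x := by
  induction r generalizing x with
  | zero => rfl
  | succ r ih => rw [Function.iterate_succ_apply, DF_smul, ih, ← Function.iterate_succ_apply]

lemma DF_iter_add (r : ℕ) (x y : CF C0 C1) :
    DF^[r] (x + y) = DF^[r] x + DF^[r] y := by
  induction r generalizing x y with
  | zero => rfl
  | succ r ih => simp only [Function.iterate_succ_apply]; rw [DF_add, ih]

lemma DF_iter_neg (r : ℕ) (x : CF C0 C1) : DF^[r] (-x) = -DF^[r] x := by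
  induction r generalizing x with
  | zero => rfl
  | succ r ih => rw [Function.iterate_succ_apply, DF_neg, ih, ← Function.iterate_succ_apply]

lemma DF_iter_zero (r : ℕ) : DF^[r] (0 : CF C0 C1) = 0 := by
  induction r with
  | zero => rfl
  | succ r ih => rw [Function.iterate_succ_apply, DF_zero, ih]

lemma op1_eq (T : OneTruncData C0 C1) (i : ℕ) (p : C0 × C1) (n : ℕ) (q : C0 × C1) :
    op1 T i p n q =
      fC n i • (embFA (n - i) (T.β p.1 q.2 + T.γ p.2 q.1) + embFB (n - i) (T.br p.2 q.2))
        + gC n i • embFA (n + 1 - i) (T.pr p.2 q.2) := by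
  unfold op1 fC gC
  rw [ite_smul, ite_smul, zero_smul, zero_smul]

lemma fact_ne (n : ℕ) : ((n.factorial : ℕ) : ℂ) ≠ 0 :=
  Nat.cast_ne_zero.mpr n.factorial_ne_zero

lemma op1_L1 {T : OneTruncData C0 C1} (hT : IsOneTruncated T) (i : ℕ) (p : C0 × C1)
    (m : ℕ) (a : C0) :
    op1 T i p m ((0 : C0), T.d a)
      = -(fC m i • embFB (m - i) (T.d (T.β a p.2))
          + gC m i • embFA (m + 1 - i) (T.β a p.2)) := by
  obtain ⟨h1, h2, h3, h4, h5, h6, h7, h8, h9, h10, h11, h12⟩ := hT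
  have e1 : T.β p.1 (T.d a) = 0 := by
    have h := h5 (T.d a) p.1
    rw [h1] at h
    exact neg_eq_zero.mp h.symm
  have e2 : T.br p.2 (T.d a) = -(T.d (T.β a p.2)) := by
    rw [← h4, h5, map_neg]
  have e3 : T.pr p.2 (T.d a) = -(T.β a p.2) := by rw [h7, h3]
  rw [op1_eq]
  simp [e1, e2, e3, embFA_zero, embFB_neg, embFA_neg, smul_neg, neg_add]
  abel

lemma op1_L2 {T : OneTruncData C0 C1} (hT : IsOneTruncated T) (i : ℕ) (p : C0 × C1)
    (m : ℕ) (a : C0) :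
    op1 T i p m (a, (0 : C1)) = -(fC m i • embFA (m - i) (T.β a p.2)) := by
  obtain ⟨h1, h2, h3, h4, h5, h6, h7, h8, h9, h10, h11, h12⟩ := hT
  rw [op1_eq]
  simp [h5, embFA_neg, embFB_zero, embFA_zero, smul_neg]

lemma op1_L3 {T : OneTruncData C0 C1} (hT : IsOneTruncated T) (i : ℕ) (p : C0 × C1)
    (m : ℕ) (a : C0) :
    op1 T i ((0 : C0), T.d a) m p = -(gC m i • embFA (m + 1 - i) (T.β a p.2)) := by
  obtain ⟨h1, h2, h3, h4, h5, h6, h7, h8, h9, h10, h11, h12⟩ := hT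
  rw [op1_eq]
  simp [h1, h2, h3, embFA_neg, embFB_zero, embFA_zero, smul_neg]

lemma op1_L4 {T : OneTruncData C0 C1} (i : ℕ) (p : C0 × C1) (m : ℕ) (a : C0) :
    op1 T i (a, (0 : C1)) m p = fC m i • embFA (m - i) (T.β a p.2) := by
  rw [op1_eq]
  simp [embFB_zero, embFA_zero]

lemma gen_mem (T : OneTruncData C0 C1) (j : ℕ) (c : C0) :
    embFB j (T.d c) - embFA (j + 1) c ∈ IhatF T :=
  Submodule.subset_span ⟨j, c, rfl⟩

lemma S1 (m i : ℕ) : fC (m + 1) i - gC m i = fC m i := by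
  unfold fC gC
  by_cases h1 : i ≤ m
  · rw [if_pos (by omega : i ≤ m + 1), if_pos h1]
    by_cases h2 : 1 ≤ i
    · rw [if_pos ⟨h2, by omega⟩]
      obtain ⟨j, rfl⟩ : ∃ j, m = i + j := ⟨m - i, by omega⟩
      rw [show i + j + 1 - i = j + 1 from by omega, show i + j - i = j from by omega,
        Nat.factorial_succ (i + j), Nat.factorial_succ j]
      have hj : (j.factorial : ℂ) ≠ 0 := fact_ne j
      have hij : ((i + j).factorial : ℂ) ≠ 0 := fact_ne (i + j)
      have hj1 : ((j : ℂ) + 1) ≠ 0 := by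
        have h := (Nat.cast_ne_zero (R := ℂ)).mpr (Nat.succ_ne_zero j)
        push_cast at h
        exact h
      push_cast
      field_simp
      ring
    · have hi0 : i = 0 := by omega
      subst hi0
      rw [if_neg (by simp)]
      simp [mul_inv_cancel₀ (fact_ne _)]
  · by_cases h2 : i = m + 1
    · subst h2
      rw [if_pos (le_refl _), if_pos ⟨by omega, le_refl _⟩, if_neg (by omega)]
      rw [Nat.sub_self, Nat.factorial_succ]
      push_cast
      simp [Nat.factorial]
    · rw [if_neg (by omega), if_neg (by omega), if_neg (by omega)]
      simp

lemma SS {k r m i s : ℕ} (hkr : k + r = m + i) (hi : 1 ≤ i) :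
    -(sgm k r m * gC s i) = sgm k r (m + 1) * fC s (i - 1) := by
  obtain ⟨j, rfl⟩ : ∃ j, i = j + 1 := ⟨i - 1, by omega⟩
  unfold sgm fC gC
  rw [show k + r - m = j + 1 from by omega, show k + r - (m + 1) = j from by omega,
    show j + 1 - 1 = j from by omega]
  by_cases hs : j + 1 ≤ s + 1
  · rw [if_pos ⟨by omega, hs⟩, if_pos (by omega : j ≤ s)]
    rw [show s + 1 - (j + 1) = s - j from by omega,
      show k + r + (m + 1) + 1 = (k + r + m + 1) + 1 from by omega,
      pow_succ, Nat.factorial_succ j]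
    have hj : (j.factorial : ℂ) ≠ 0 := fact_ne j
    have hj1 : ((j : ℂ) + 1) ≠ 0 := by
        have h := (Nat.cast_ne_zero (R := ℂ)).mpr (Nat.succ_ne_zero j)
        push_cast at h
        exact h
    have hr : (r.factorial : ℂ) ≠ 0 := fact_ne r
    have hsj : ((s - j).factorial : ℂ) ≠ 0 := fact_ne (s - j)
    push_cast
    field_simp
    ring
  · rw [if_neg (by omega), if_neg (by omega)]
    simp

end Vec

end Stmt13Aux
namespace Stmt13Aux
set_option linter.unusedSectionVars false
section Vec2
variable {C0 C1 : Type} [AddCommGroup C0] [Module ℂ C0] [AddCommGroup C1] [Module ℂ C1]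

lemma opF_ne (T : OneTruncData C0 C1) (k s n : ℕ) (hs : s ≠ 0) (p q : C0 × C1) :
    opF T k s p n q = ∑ r ∈ Finset.range (n + s + 2),
      (if n ≤ k + r then sgm k r n • DF^[r] (op1 T (k + r - n) q s p) else 0) := by
  rw [opF, if_neg hs]
  rfl

/-- auxiliary scalar function for the `m = 0` case of the second statement -/
def hAux (k n : ℕ) : ℕ → ℂ :=
  fun r => if n ≤ k + r ∧ k + r ≤ n + 1 then -(sgm k r n * fC 1 (k + r - n)) else 0

lemma fC10 : fC 1 0 = 1 := by
  unfold fC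
  norm_num [Nat.factorial]

lemma fC11 : fC 1 1 = 1 := by
  unfold fC
  norm_num [Nat.factorial]

lemma hAux_sum (k n : ℕ) :
    ∑ r ∈ Finset.range (n + 1 + 2), hAux k n r = -(gC n k) := by
  rcases le_or_gt k n with hk | hk
  · have hsub : ({n - k, n + 1 - k} : Finset ℕ) ⊆ Finset.range (n + 1 + 2) := by
      intro x hx
      simp only [Finset.mem_insert, Finset.mem_singleton] at hx
      rcases hx with h | h <;> simp [Finset.mem_range] <;> omega
    have hzero : ∀ x ∈ Finset.range (n + 1 + 2), x ∉ ({n - k, n + 1 - k} : Finset ℕ) →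
        hAux k n x = 0 := by
      intro x _ hx
      simp only [Finset.mem_insert, Finset.mem_singleton] at hx
      push_neg at hx
      unfold hAux
      rw [if_neg (by omega)]
    rw [← Finset.sum_subset hsub hzero,
      Finset.sum_pair (show n - k ≠ n + 1 - k from by omega)]
    have e1 : hAux k n (n - k) = (n.factorial : ℂ) * (((n - k).factorial : ℂ))⁻¹ := by
      unfold hAux
      rw [if_pos (by omega : n ≤ k + (n - k) ∧ k + (n - k) ≤ n + 1)]
      unfold sgm
      rw [show k + (n - k) - n = 0 from by omega, show k + (n - k) = n from by omega, fC10]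
      have : Odd (n + n + 1) := ⟨n, by ring⟩
      rw [this.neg_one_pow]
      simp [Nat.factorial]
      ring
    have e2 : hAux k n (n + 1 - k) =
        -(((n + 1).factorial : ℂ) * (((n + 1 - k).factorial : ℂ))⁻¹) := by
      unfold hAux
      rw [if_pos (by omega : n ≤ k + (n + 1 - k) ∧ k + (n + 1 - k) ≤ n + 1)]
      unfold sgm
      rw [show k + (n + 1 - k) - n = 1 from by omega,
        show k + (n + 1 - k) = n + 1 from by omega, fC11]
      have : Even (n + 1 + n + 1) := ⟨n + 1, by ring⟩
      rw [this.neg_one_pow]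
      simp [Nat.factorial]
      ring
    rw [e1, e2]
    by_cases hk0 : k = 0
    · subst hk0
      unfold gC
      rw [if_neg (by omega)]
      simp [mul_inv_cancel₀ (fact_ne _)]
    · unfold gC
      rw [if_pos ⟨by omega, by omega⟩]
      obtain ⟨j, rfl⟩ : ∃ j, n = k + j := ⟨n - k, by omega⟩
      rw [show k + j - k = j from by omega, show k + j + 1 - k = j + 1 from by omega,
        Nat.factorial_succ j, Nat.factorial_succ (k + j)]
      have hj : (j.factorial : ℂ) ≠ 0 := fact_ne j
      have hj1 : ((j : ℂ) + 1) ≠ 0 := by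
        have h := (Nat.cast_ne_zero (R := ℂ)).mpr (Nat.succ_ne_zero j)
        push_cast at h
        exact h
      push_cast
      field_simp
      ring
  · by_cases hk1 : k = n + 1
    · subst hk1
      rw [Finset.sum_eq_single_of_mem 0 (Finset.mem_range.mpr (by omega))
        (fun b _ hb => by unfold hAux; rw [if_neg (by omega)])]
      unfold hAux
      rw [if_pos (by omega : n ≤ n + 1 + 0 ∧ n + 1 + 0 ≤ n + 1)]
      unfold sgm
      rw [show n + 1 + 0 - n = 1 from by omega, show n + 1 + 0 = n + 1 from by omega, fC11]
      have : Even (n + 1 + 0 + n + 1) := ⟨n + 1, by ring⟩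
      rw [this.neg_one_pow]
      unfold gC
      rw [if_pos ⟨by omega, by omega⟩]
      rw [show n + 1 - (n + 1) = 0 from by omega, Nat.factorial_succ n]
      simp [Nat.factorial]
    · rw [Finset.sum_eq_zero (fun r _ => by unfold hAux; rw [if_neg (by omega)])]
      unfold gC
      rw [if_neg (by omega)]
      simp

example (a b : ℂ) (h : a - b = 0) : a = b := by linear_combination h
example {M : Type} [AddCommGroup M] [Module ℂ M] (c d : ℂ) (X Y : M) :
    c • -(d • X + c • Y) - c • -((d + c) • Y) = (-(c * d)) • (X - Y) := by module

end Vec2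
end Stmt13Aux

/-- For a 1-truncated conformal algebra `(𝔸⊕𝔹, ∂)`, the subspace `∂̂C(𝔸)` of
`C(𝔸⊕𝔹) = ℂ[D]⊗(𝔸⊕𝔹)` is a two-sided ideal for the nonassociative products `uₙ`:
all products of generators with `∂̂(Dᵐ⊗a) = Dᵐ⊗∂a - D^{m+1}⊗a`, on either side,
land in `∂̂C(𝔸)`. -/
theorem stmt13 {C0 C1 : Type} [AddCommGroup C0] [Module ℂ C0]
    [AddCommGroup C1] [Module ℂ C1]
    (T : OneTruncData C0 C1) (hT : IsOneTruncated T) :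
    (∀ (k s : ℕ) (p : C0 × C1) (m : ℕ) (a : C0),
      opF T k s p m ((0 : C0), T.d a) - opF T k s p (m + 1) (a, (0 : C1)) ∈ IhatF T) ∧
    (∀ (k m : ℕ) (a : C0) (n : ℕ) (q : C0 × C1),
      opF T k m ((0 : C0), T.d a) n q - opF T k (m + 1) (a, (0 : C1)) n q ∈ IhatF T) := by
  open Stmt13Aux in
  constructor
  · intro k s p m a
    by_cases hs : s = 0
    · subst hs
      rw [show opF T k 0 p m ((0:C0), T.d a) = op1 T k p m ((0:C0), T.d a) from by
          rw [opF, if_pos rfl],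
        show opF T k 0 p (m + 1) (a, (0:C1)) = op1 T k p (m + 1) (a, (0:C1)) from by
          rw [opF, if_pos rfl],
        op1_L1 hT k p m a, op1_L2 hT k p (m + 1) a]
      by_cases hk : k ≤ m
      · rw [show m + 1 - k = (m - k) + 1 from by omega,
          show fC (m + 1) k = fC m k + gC m k from by linear_combination S1 m k]
        have key : -(fC m k • embFB (m - k) (T.d (T.β a p.2))
              + gC m k • embFA ((m - k) + 1) (T.β a p.2))
            - -((fC m k + gC m k) • embFA ((m - k) + 1) (T.β a p.2))
            = (-(fC m k)) • (embFB (m - k) (T.d (T.β a p.2))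
                - embFA ((m - k) + 1) (T.β a p.2)) := by
          module
        rw [key]
        exact Submodule.smul_mem _ _ (gen_mem T _ _)
      · have hf : fC m k = 0 := by unfold fC; rw [if_neg (by omega)]
        have hfc : fC (m + 1) k = gC m k := by
          have h := S1 m k
          rw [hf] at h
          linear_combination h
        rw [hf, hfc, zero_smul, zero_add, sub_self]
        exact zero_mem _
    · rw [opF_ne T k s m hs p ((0:C0), T.d a), opF_ne T k s (m + 1) hs p (a, (0:C1))]
      have hterm : ∀ r : ℕ,
          (if m ≤ k + r then
              sgm k r m • DF^[r] (op1 T (k + r - m) ((0:C0), T.d a) s p) else 0)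
            = (if m + 1 ≤ k + r then
              sgm k r (m + 1) • DF^[r] (op1 T (k + r - (m + 1)) (a, (0:C1)) s p) else 0) := by
        intro r
        rcases Nat.lt_or_ge (k + r) m with hc | hc
        · rw [if_neg (by omega), if_neg (by omega)]
        · by_cases he : k + r = m
          · rw [if_pos (by omega), if_neg (by omega),
              show k + r - m = 0 from by omega, op1_L3 hT,
              show gC s 0 = 0 from by unfold gC; rw [if_neg (by omega)],
              zero_smul, neg_zero, DF_iter_zero, smul_zero]
          · obtain ⟨i, hkr, hi⟩ : ∃ i, k + r = m + i ∧ 1 ≤ i := ⟨k + r - m, by omega, by omega⟩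
            rw [if_pos (by omega), if_pos (by omega),
              show k + r - m = i from by omega, show k + r - (m + 1) = i - 1 from by omega,
              op1_L3 hT, op1_L4, DF_iter_neg, DF_iter_smul, DF_iter_embFA,
              DF_iter_smul, DF_iter_embFA]
            by_cases his : i ≤ s + 1
            · rw [show s - (i - 1) + r = s + 1 - i + r from by omega,
                smul_neg, smul_smul, smul_smul, ← neg_smul, SS hkr hi]
            · rw [show gC s i = 0 from by unfold gC; rw [if_neg (by omega)],
                show fC s (i - 1) = 0 from by unfold fC; rw [if_neg (by omega)]]
              simp
      have hlast : (if m + 1 ≤ k + (m + s + 2) then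
          sgm k (m + s + 2) (m + 1) •
            DF^[m + s + 2] (op1 T (k + (m + s + 2) - (m + 1)) (a, (0:C1)) s p) else 0) = 0 := by
        rw [if_pos (by omega), op1_L4,
          show fC s (k + (m + s + 2) - (m + 1)) = 0 from by unfold fC; rw [if_neg (by omega)],
          zero_smul, DF_iter_zero, smul_zero]
      have hshift : (∑ r ∈ Finset.range (m + 1 + s + 2),
            (if m + 1 ≤ k + r then
              sgm k r (m + 1) • DF^[r] (op1 T (k + r - (m + 1)) (a, (0:C1)) s p) else 0))
          = ∑ r ∈ Finset.range (m + s + 2),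
            (if m + 1 ≤ k + r then
              sgm k r (m + 1) • DF^[r] (op1 T (k + r - (m + 1)) (a, (0:C1)) s p) else 0) := by
        rw [show m + 1 + s + 2 = (m + s + 2) + 1 from by omega, Finset.sum_range_succ,
          hlast, add_zero]
      rw [hshift, Finset.sum_congr rfl (fun r _ => hterm r), sub_self]
      exact zero_mem _
  · intro k m a n q
    by_cases hm : m = 0
    · subst hm
      rw [show opF T k 0 ((0:C0), T.d a) n q = op1 T k ((0:C0), T.d a) n q from by
          rw [opF, if_pos rfl],
        op1_L3 hT k q n a, opF_ne T k 1 n one_ne_zero (a, (0:C1)) q]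
      have hterm : ∀ r : ℕ,
          (if n ≤ k + r then sgm k r n • DF^[r] (op1 T (k + r - n) q 1 (a, (0:C1))) else 0)
            = hAux k n r • embFA (n + 1 - k) (T.β a q.2) := by
        intro r
        by_cases hc : n ≤ k + r
        · rw [if_pos hc, op1_L2 hT, DF_iter_neg, DF_iter_smul, DF_iter_embFA]
          by_cases hc2 : k + r ≤ n + 1
          · rw [show 1 - (k + r - n) + r = n + 1 - k from by omega]
            unfold hAux
            rw [if_pos ⟨hc, hc2⟩, smul_neg, smul_smul, ← neg_smul]
          · rw [show fC 1 (k + r - n) = 0 from by unfold fC; rw [if_neg (by omega)]]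
            unfold hAux
            rw [if_neg (by omega)]
            simp
        · unfold hAux
          rw [if_neg hc, if_neg (by omega), zero_smul]
      rw [Finset.sum_congr rfl (fun r _ => hterm r), ← Finset.sum_smul, hAux_sum k n,
        neg_smul, sub_self]
      exact zero_mem _
    · rw [opF_ne T k m n hm ((0:C0), T.d a) q,
        opF_ne T k (m + 1) n (Nat.succ_ne_zero m) (a, (0:C1)) q]
      have hlast : (if n ≤ k + (n + m + 2) then
          sgm k (n + m + 2) n •
            DF^[n + m + 2] (op1 T (k + (n + m + 2) - n) q (m + 1) (a, (0:C1))) else 0) = 0 := by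
        rw [if_pos (by omega), op1_L2 hT,
          show fC (m + 1) (k + (n + m + 2) - n) = 0 from by unfold fC; rw [if_neg (by omega)],
          zero_smul, neg_zero, DF_iter_zero, smul_zero]
      have hshift : (∑ r ∈ Finset.range (n + (m + 1) + 2),
            (if n ≤ k + r then
              sgm k r n • DF^[r] (op1 T (k + r - n) q (m + 1) (a, (0:C1))) else 0))
          = ∑ r ∈ Finset.range (n + m + 2),
            (if n ≤ k + r then
              sgm k r n • DF^[r] (op1 T (k + r - n) q (m + 1) (a, (0:C1))) else 0) := by
        rw [show n + (m + 1) + 2 = (n + m + 2) + 1 from by omega, Finset.sum_range_succ,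
          hlast, add_zero]
      rw [hshift, ← Finset.sum_sub_distrib]
      apply Submodule.sum_mem
      intro r _
      by_cases hc : n ≤ k + r
      · rw [if_pos hc, if_pos hc, op1_L1 hT, op1_L2 hT,
          DF_iter_neg, DF_iter_add, DF_iter_smul, DF_iter_smul, DF_iter_embFB, DF_iter_embFA,
          DF_iter_neg, DF_iter_smul, DF_iter_embFA]
        by_cases him : k + r - n ≤ m
        · rw [show m + 1 - (k + r - n) + r = (m - (k + r - n) + r) + 1 from by omega,
            show fC (m + 1) (k + r - n) = fC m (k + r - n) + gC m (k + r - n) from by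
              linear_combination S1 m (k + r - n)]
          have key : sgm k r n • -(fC m (k + r - n) •
                  embFB (m - (k + r - n) + r) (T.d (T.β a q.2))
                + gC m (k + r - n) • embFA ((m - (k + r - n) + r) + 1) (T.β a q.2))
              - sgm k r n • -((fC m (k + r - n) + gC m (k + r - n)) •
                  embFA ((m - (k + r - n) + r) + 1) (T.β a q.2))
              = (-(sgm k r n * fC m (k + r - n))) •
                  (embFB (m - (k + r - n) + r) (T.d (T.β a q.2))
                    - embFA ((m - (k + r - n) + r) + 1) (T.β a q.2)) := by
            module
          rw [key]
          exact Submodule.smul_mem _ _ (gen_mem T _ _)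
        · have hf : fC m (k + r - n) = 0 := by unfold fC; rw [if_neg (by omega)]
          have hfc : fC (m + 1) (k + r - n) = gC m (k + r - n) := by
            have h := S1 m (k + r - n)
            rw [hf] at h
            linear_combination h
          rw [hf, hfc, zero_smul, zero_add, sub_self]
          exact zero_mem _
      · rw [if_neg hc, if_neg hc, sub_self]
        exact zero_mem _
end
end

section
/- Let (𝔸 ⊕ 𝔹, ∂) be a 1-truncated conformal algebra and 𝒞 = C(𝔸⊕𝔹)/∂̂C(𝔸). Then in 𝒞, the skew symmetry Y^0_-(u,x)v = Sing(e^{xD}Y^0_-(v,-x)u) holds for all u, v ∈ 𝔸 ⊕ 𝔹. -/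
open scoped BigOperators

noncomputable section

section QuotientModel

variable {C0 C1 : Type} [AddCommGroup C0] [Module ℂ C0] [AddCommGroup C1] [Module ℂ C1]

/-- Model of the quotient `𝒞 = C(𝔸⊕𝔹)/∂̂C(𝔸)` as `𝔸 × (ℕ →₀ 𝔹)`:
the class of `1⊗a` is `(a,0)` and the class of `Dⁿ⊗b` is `(0, single n b)`. -/
abbrev QC (C0 C1 : Type) [Zero C1] := C0 × (ℕ →₀ C1)

/-- The class of `Dⁿ⊗a` for `a ∈ 𝔸` in the quotient: `Dⁿ⊗a = D^{n-1}⊗∂a` for `n ≥ 1`. -/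
def embQ (T : OneTruncData C0 C1) : ℕ → C0 → QC C0 C1
  | 0, a => (a, 0)
  | (m+1), a => (0, Finsupp.single m (T.d a))

/-- The class of `Dⁿ⊗b` for `b ∈ 𝔹`. -/
def embQB : ℕ → C1 → QC C0 C1 := fun n b => (0, Finsupp.single n b)

/-- The operator `D` on the quotient model. -/
def DQ (T : OneTruncData C0 C1) : QC C0 C1 → QC C0 C1 :=
  fun x => (0, Finsupp.single 0 (T.d x.1) + Finsupp.mapDomain (· + 1) x.2)

/-- The generator `a + b ∈ 𝔸 ⊕ 𝔹` viewed in the quotient model. -/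
def genQ : C0 × C1 → QC C0 C1 := fun p => (p.1, Finsupp.single 0 p.2)

/-- The component operation `pᵢ x` for a generator `p = a + b ∈ 𝔸 ⊕ 𝔹` acting on a
general element `x` of the quotient model, given by the explicit formulas
`Y⁰₋(a,x)a' = 0`, `Y⁰₋(a,x)b = a₀b x⁻¹`, `Y⁰₋(b,x)a = b₀a x⁻¹`,
`Y⁰₋(b,x)b' = b₀b' x⁻¹ + b₁b' x⁻²` extended by the `D`-translation rules, i.e.
`pᵢ(Dⁿ⊗b') = (n!/(n-i)!) D^{n-i}(a₀b' + b₀b') + (i·n!/(n+1-i)!) D^{n+1-i}(b₁b')`. -/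
def opQ (T : OneTruncData C0 C1) (i : ℕ) (p : C0 × C1) (x : QC C0 C1) : QC C0 C1 :=
  (if i = 0 then ((T.γ p.2 x.1, 0) : QC C0 C1) else 0)
  + x.2.sum fun n b' =>
      (if i ≤ n then ((n.factorial : ℂ) * (((n - i).factorial : ℂ))⁻¹) •
          (embQ T (n - i) (T.β p.1 b') + embQB (n - i) (T.br p.2 b')) else 0)
      + (if 1 ≤ i ∧ i ≤ n + 1 then
          ((i : ℂ) * (n.factorial : ℂ) * (((n + 1 - i).factorial : ℂ))⁻¹) •
            embQ T (n + 1 - i) (T.pr p.2 b') else 0)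

/-- The operation `uᵢv` of two generators `u, v ∈ 𝔸 ⊕ 𝔹`, which again lies in `𝔸 ⊕ 𝔹`. -/
def uopv (T : OneTruncData C0 C1) : ℕ → C0 × C1 → C0 × C1 → C0 × C1
  | 0, p, q => (T.β p.1 q.2 + T.γ p.2 q.1, T.br p.2 q.2)
  | 1, p, q => (T.pr p.2 q.2, 0)
  | _+2, _, _ => 0

lemma embQ_zero (T : OneTruncData C0 C1) (n : ℕ) : embQ T n (0 : C0) = 0 := by
  cases n <;> simp [embQ, Prod.ext_iff]

lemma DQ_zero (T : OneTruncData C0 C1) : DQ T (0 : QC C0 C1) = 0 := by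
  simp [DQ, Prod.ext_iff]

lemma DQ_iter_zero (T : OneTruncData C0 C1) (r : ℕ) : (DQ T)^[r] (0 : QC C0 C1) = 0 :=
  Function.iterate_fixed (DQ_zero T) r

lemma genQ_zero : genQ (0 : C0 × C1) = (0 : QC C0 C1) := by
  simp [genQ, Prod.ext_iff]

lemma uopv_add_two (T : OneTruncData C0 C1) (m : ℕ) (p q : C0 × C1) :
    uopv T (m + 2) p q = 0 := rfl

lemma opQ_gen (T : OneTruncData C0 C1) (k : ℕ) (p q : C0 × C1) :
    opQ T k p (genQ q) =
      (if k = 0 then ((T.γ p.2 q.1 + T.β p.1 q.2, Finsupp.single 0 (T.br p.2 q.2)) : QC C0 C1)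
       else if k = 1 then (T.pr p.2 q.2, 0) else 0) := by
  rw [opQ]
  show _ + ((Finsupp.single 0 q.2 : ℕ →₀ C1).sum _) = _
  rw [Finsupp.sum_single_index]
  · match k with
    | 0 => simp [embQ, embQB, genQ, Prod.ext_iff]
    | 1 => simp [embQ, embQB, genQ, Prod.ext_iff]
    | (m+2) =>
        have h1 : ¬ (m + 2 ≤ 0) := by omega
        have h2 : ¬ (1 ≤ m + 2 ∧ m + 2 ≤ 0 + 1) := by omega
        simp [h1, h2, genQ]
  · simp [embQ_zero, embQB, Prod.ext_iff]

end QuotientModel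

/-- In the quotient `𝒞 = C(𝔸⊕𝔹)/∂̂C(𝔸)`, skew symmetry
`Y⁰₋(u,x)v = Sing(e^{xD} Y⁰₋(v,-x)u)` holds for generators `u, v ∈ 𝔸⊕𝔹`; in
components, `uₖv = ∑ᵣ (-1)^{k+r+1} (1/r!) Dʳ(v_{k+r} u)` (the sum is finite since
`v_j u = 0` for `j ≥ 2`, so any truncation at `N + 2 ≥ 2` terms computes it). -/
theorem stmt14 {C0 C1 : Type} [AddCommGroup C0] [Module ℂ C0]
    [AddCommGroup C1] [Module ℂ C1]
    (T : OneTruncData C0 C1) (hT : IsOneTruncated T)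
    (p q : C0 × C1) (k N : ℕ) :
    opQ T k p (genQ q) =
      ∑ r ∈ Finset.range (N + 2),
        ((-1 : ℂ) ^ (k + r + 1) * ((r.factorial : ℂ))⁻¹) •
          (DQ T)^[r] (genQ (uopv T (k + r) q p)) := by
  obtain ⟨h1, h2, h3, h4, h5, h6, h7, _⟩ := hT
  have htail : ∀ i : ℕ, 2 ≤ k + i →
      (((-1 : ℂ) ^ (k + i + 1) * ((Nat.factorial i : ℂ))⁻¹) •
        (DQ T)^[i] (genQ (uopv T (k + i) q p))) = 0 := by
    intro i hi
    obtain ⟨m, hm⟩ : ∃ m, k + i = m + 2 := ⟨k + i - 2, by omega⟩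
    rw [hm, uopv_add_two, genQ_zero, DQ_iter_zero, smul_zero]
  rw [Finset.sum_range_succ', Finset.sum_range_succ']
  match k with
  | 0 =>
    have : ∀ i ∈ Finset.range N,
        (((-1 : ℂ) ^ (0 + (i + 1 + 1) + 1) * ((Nat.factorial (i + 1 + 1) : ℂ))⁻¹) •
          (DQ T)^[i + 1 + 1] (genQ (uopv T (0 + (i + 1 + 1)) q p))) = 0 := fun i _ =>
      htail (i + 1 + 1) (by omega)
    rw [Finset.sum_eq_zero this, zero_add, opQ_gen]
    show _ = _ • (DQ T) ((DQ T)^[0] _) + _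
    simp only [Function.iterate_zero, id_eq, uopv, genQ, DQ]
    simp only [pow_succ, pow_zero, pow_one, Nat.factorial, Nat.cast_one, inv_one, mul_one,
      one_mul, neg_mul, neg_neg, one_smul, neg_smul, Prod.smul_mk, Prod.neg_mk, Prod.mk_add_mk]
    refine Prod.ext ?_ ?_
    · show T.γ p.2 q.1 + T.β p.1 q.2 = 0 + -(T.β q.1 p.2 + T.γ q.2 p.1)
      rw [h5 p.2 q.1, h5 q.2 p.1]
      abel
    · show Finsupp.single 0 (T.br p.2 q.2) =
        (Finsupp.single 0 (T.d (T.pr q.2 p.2)) +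
          Finsupp.mapDomain (· + 1) (Finsupp.single 0 (0 : C1))) +
        -(Finsupp.single 0 (T.br q.2 p.2))
      rw [h6 p.2 q.2]
      simp [Finsupp.single_add, Finsupp.single_neg, add_comm]
  | 1 =>
    have : ∀ i ∈ Finset.range N,
        (((-1 : ℂ) ^ (1 + (i + 1 + 1) + 1) * ((Nat.factorial (i + 1 + 1) : ℂ))⁻¹) •
          (DQ T)^[i + 1 + 1] (genQ (uopv T (1 + (i + 1 + 1)) q p))) = 0 := fun i _ =>
      htail (i + 1 + 1) (by omega)
    rw [Finset.sum_eq_zero this, zero_add, htail 1 (by omega), zero_add, opQ_gen]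
    simp only [Function.iterate_zero, id_eq, uopv, genQ]
    simp only [pow_succ, pow_zero, pow_one, Nat.factorial, Nat.cast_one, inv_one, mul_one,
      neg_mul, one_mul, neg_neg, one_smul]
    refine Prod.ext ?_ ?_
    · exact h7 p.2 q.2
    · simp
  | (m+2) =>
    have : ∀ i ∈ Finset.range N,
        (((-1 : ℂ) ^ (m + 2 + (i + 1 + 1) + 1) * ((Nat.factorial (i + 1 + 1) : ℂ))⁻¹) •
          (DQ T)^[i + 1 + 1] (genQ (uopv T (m + 2 + (i + 1 + 1)) q p))) = 0 := fun i _ =>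
      htail (i + 1 + 1) (by omega)
    rw [Finset.sum_eq_zero this, htail 1 (by omega), htail 0 (by omega), opQ_gen]
    simp
end
end

section
/- Let (𝔸 ⊕ 𝔹, ∂) be a 1-truncated conformal algebra. In the quotient 𝒞 = C(𝔸⊕𝔹)/∂̂C(𝔸), the half commutator formula holds on generators: for u, v, w ∈ 𝔸 ⊕ 𝔹, Y^0_-(u,x₁)Y^0_-(v,x₂)w − Y^0_-(v,x₂)Y^0_-(u,x₁)w = Sing(Y^0_-(Y^0_-(u,x₁−x₂)v, x₂)w). -/
open scoped BigOperators

noncomputable section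

set_option linter.unusedSectionVars false

section Aux
variable {C0 C1 : Type} [AddCommGroup C0] [Module ℂ C0] [AddCommGroup C1] [Module ℂ C1]

lemma opQ_gen0 (T : OneTruncData C0 C1) (p : C0 × C1) (c : C0) (b : C1) :
    opQ T 0 p ((c, Finsupp.single 0 b) : QC C0 C1)
      = (T.γ p.2 c + T.β p.1 b, Finsupp.single 0 (T.br p.2 b)) := by
  rw [opQ, Finsupp.sum_single_index]
  · simp [embQ, embQB, Prod.ext_iff]
  · simp [embQ, embQB]

lemma opQ_gen1 (T : OneTruncData C0 C1) (p : C0 × C1) (c : C0) (b : C1) :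
    opQ T 1 p ((c, Finsupp.single 0 b) : QC C0 C1) = (T.pr p.2 b, (0 : ℕ →₀ C1)) := by
  rw [opQ, Finsupp.sum_single_index]
  · simp [embQ, embQB, Prod.ext_iff]
  · simp [embQ, embQB]

lemma opQ_gen2 (T : OneTruncData C0 C1) (n : ℕ) (p : C0 × C1) (c : C0) (b : C1) :
    opQ T (n + 2) p ((c, Finsupp.single 0 b) : QC C0 C1) = 0 := by
  rw [opQ, Finsupp.sum_single_index]
  · simp [embQ, embQB]
  · simp [embQ, embQB]

lemma pair_zero (c : C0) :
    ((c, (0 : ℕ →₀ C1)) : QC C0 C1) = (c, Finsupp.single 0 (0 : C1)) := by simp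

lemma qc_zero : (0 : QC C0 C1) = (((0:C0), Finsupp.single 0 (0:C1)) : QC C0 C1) := by simp [Prod.mk_zero_zero]

lemma opQ_ge2 (T : OneTruncData C0 C1) {j : ℕ} (hj : 2 ≤ j) (p : C0 × C1) (c : C0) (b : C1) :
    opQ T j p ((c, Finsupp.single 0 b) : QC C0 C1) = 0 := by
  obtain ⟨n, rfl⟩ : ∃ n, j = n + 2 := ⟨j - 2, by omega⟩
  exact opQ_gen2 T n p c b

lemma opQ_zero (T : OneTruncData C0 C1) (j : ℕ) (p : C0 × C1) :
    opQ T j p (0 : QC C0 C1) = 0 := by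
  rw [qc_zero]
  rcases j with _ | _ | j
  · rw [opQ_gen0]; simp
  · rw [opQ_gen1]; simp
  · rw [opQ_gen2]; simp [Prod.mk_zero_zero]

lemma opQ_pzero (T : OneTruncData C0 C1) (j : ℕ) (x : QC C0 C1) :
    opQ T j ((0 : C0 × C1)) x = 0 := by
  have h : ∀ n : ℕ, embQ T n (0 : C0) = 0 := by intro n; cases n <;> simp [embQ]
  simp [opQ, h, embQB, Prod.mk_zero_zero]

lemma opQ_snd0 (T : OneTruncData C0 C1) {j : ℕ} (hj : 1 ≤ j) (c d : C0) (b : C1) :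
    opQ T j ((c, (0:C1)) : C0 × C1) ((d, Finsupp.single 0 b) : QC C0 C1) = 0 := by
  rcases j with _ | _ | j
  · omega
  · rw [opQ_gen1]; simp
  · exact opQ_gen2 T j _ d b

end Aux


section Aux2
set_option linter.unusedSectionVars false
variable {C0 C1 : Type} [AddCommGroup C0] [Module ℂ C0] [AddCommGroup C1] [Module ℂ C1]

lemma genQ_eq (r : C0 × C1) : genQ r = ((r.1, Finsupp.single 0 r.2) : QC C0 C1) := rfl

lemma opQ_gen0' (T : OneTruncData C0 C1) (p : C0 × C1) (c : C0) :
    opQ T 0 p ((c, (0 : ℕ →₀ C1)) : QC C0 C1) = (T.γ p.2 c, 0) := by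
  rw [pair_zero, opQ_gen0]; simp

lemma opQ_gen1' (T : OneTruncData C0 C1) (p : C0 × C1) (c : C0) :
    opQ T 1 p ((c, (0 : ℕ →₀ C1)) : QC C0 C1) = 0 := by
  rw [pair_zero, opQ_gen1]; simp

lemma op_gen_zero (T : OneTruncData C0 C1) {j : ℕ} (h : 2 ≤ j) (p q r : C0 × C1) (k : ℕ) :
    opQ T j p (opQ T k q (genQ r)) = 0 := by
  rcases k with _ | _ | k
  · rw [genQ_eq, opQ_gen0, opQ_ge2 T h]
  · rw [genQ_eq, opQ_gen1, pair_zero, opQ_ge2 T h]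
  · rw [genQ_eq, opQ_ge2 T (by omega), opQ_zero]

lemma rhs_zero (T : OneTruncData C0 C1) (p q r : C0 × C1) {m k : ℕ} (h : 2 ≤ m + k) :
    ∑ i ∈ Finset.range (m + 1),
        ((m.choose i : ℂ)) • opQ T (m + k - i) (uopv T i p q) (genQ r) = 0 := by
  apply Finset.sum_eq_zero
  intro i _
  rcases i with _ | _ | i
  · rw [genQ_eq, opQ_ge2 T (by omega), smul_zero]
  · have h1 : 1 ≤ m + k - 1 := by omega
    rw [show uopv T 1 p q = ((T.pr p.2 q.2, (0:C1)) : C0 × C1) from rfl,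
        genQ_eq, opQ_snd0 T h1, smul_zero]
  · rw [show uopv T (i+1+1) p q = 0 from rfl, opQ_pzero, smul_zero]

end Aux2

/-- In the quotient `𝒞 = C(𝔸⊕𝔹)/∂̂C(𝔸)`, the half commutator formula holds on
generators `u, v, w ∈ 𝔸⊕𝔹`; in components,
`uₘ(vₖw) - vₖ(uₘw) = ∑_{i=0}^{m} (m choose i) (uᵢv)_{m+k-i} w`. -/
theorem stmt15 {C0 C1 : Type} [AddCommGroup C0] [Module ℂ C0]
    [AddCommGroup C1] [Module ℂ C1]
    (T : OneTruncData C0 C1) (hT : IsOneTruncated T)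
    (p q r : C0 × C1) (m k : ℕ) :
    opQ T m p (opQ T k q (genQ r)) - opQ T k q (opQ T m p (genQ r))
      = ∑ i ∈ Finset.range (m + 1),
          ((m.choose i : ℂ)) • opQ T (m + k - i) (uopv T i p q) (genQ r) := by
  obtain ⟨h1,h2,h3,h4,h5,h6,h7,h8,h9,h10,h11,h12⟩ := hT
  rcases m with _ | _ | m
  · rcases k with _ | _ | k
    · -- (0,0)
      simp only [genQ_eq, opQ_gen0, uopv, Finset.sum_range_one, Nat.choose_self, Nat.cast_one,
        one_smul, Nat.add_zero, Nat.zero_add, Nat.sub_zero]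
      rw [Prod.mk_sub_mk, Prod.mk.injEq]
      constructor
      · rw [map_add (T.γ p.2), map_add (T.γ q.2), h9 p.2 q.2 r.1, h10 p.2 q.1 r.2,
          h11 p.1 q.2 r.2, map_add T.β, LinearMap.add_apply]
        abel
      · rw [← Finsupp.single_sub]
        congr 1
        rw [h8 p.2 q.2 r.2]
        abel
    · -- (0,1)
      simp only [genQ_eq, opQ_gen1, opQ_gen0, opQ_gen0', uopv, Finset.sum_range_one,
        Nat.choose_self, Nat.cast_one, one_smul, Nat.add_zero, Nat.zero_add, Nat.sub_zero]
      rw [Prod.mk_sub_mk, Prod.mk.injEq]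
      constructor
      · rw [h12 p.2 q.2 r.2]; abel
      · simp
    · -- (0,k+2)
      rw [rhs_zero T p q r (m := 0) (k := k+1+1) (by omega),
        op_gen_zero T (show (2:ℕ) ≤ k+1+1 by omega) q p r 0,
        genQ_eq, opQ_ge2 T (show (2:ℕ) ≤ k+1+1 by omega), opQ_zero, sub_zero]
  · rcases k with _ | _ | k
    · -- (1,0)
      simp only [genQ_eq, opQ_gen0, opQ_gen1, opQ_gen0', uopv, Finset.sum_range_succ,
        Finset.sum_range_one, Nat.choose_self, Nat.choose_zero_right, Nat.cast_one, one_smul,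
        Nat.add_zero, Nat.zero_add, Nat.sub_zero, Nat.sub_self, map_zero, LinearMap.zero_apply,
        Finset.sum_range_zero, zero_add, Finsupp.single_zero]
      rw [Prod.mk_sub_mk, Prod.mk_add_mk, Prod.mk.injEq]
      constructor
      · rw [h12 q.2 p.2 r.2, h6 p.2 q.2]
        simp only [map_add, map_neg, LinearMap.add_apply, LinearMap.neg_apply]
        rw [h3 ((T.pr q.2) p.2) r.2, h7 q.2 p.2]
        abel
      · simp
    · -- (1,1)
      rw [rhs_zero T p q r (m := 0+1) (k := 0+1) (by omega)]
      simp [genQ_eq, opQ_gen1, opQ_gen1']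
    · -- (1,k+2)
      rw [rhs_zero T p q r (m := 0+1) (k := k+1+1) (by omega),
        op_gen_zero T (show (2:ℕ) ≤ k+1+1 by omega) q p r (0+1)]
      rw [genQ_eq, opQ_ge2 T (show (2:ℕ) ≤ k+1+1 by omega), opQ_zero, sub_zero]
  · -- (m+2, k)
    rw [rhs_zero T p q r (m := m+1+1) (k := k) (by omega),
      op_gen_zero T (show (2:ℕ) ≤ m+1+1 by omega) p q r k,
      genQ_eq, opQ_ge2 T (show (2:ℕ) ≤ m+1+1 by omega), opQ_zero, sub_zero]
end
end

section
/- Let B be a Courant A-algebroid, 𝒞 the vertex Lie algebra built from the 1-truncated conformal algebra A ⊕ B, and S(𝒞) the associated ℕ-graded vertex Poisson algebra. Let E_0 = span{e − 1, a·a' − aa' : a, a' ∈ A} ⊆ S(𝒞)_{(0)} and E_1 = span{a·b − ab : a ∈ A, b ∈ B} ⊆ S(𝒞)_{(1)}, where · is the symmetric algebra product and juxtaposition denotes the A-algebra/A-module products, e is the identity of A and 1 the identity of S(𝒞). Then for all u ∈ A ⊕ B and n ∈ ℕ, u_n(E_0 ⊕ E_1) ⊆ E_0 ⊕ E_1, and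 D E_0 ⊆ E_1. -/
open scoped BigOperators

noncomputable section

section Courant

variable {A B : Type} [CommRing A] [Algebra ℂ A] [AddCommGroup B] [Module ℂ B]
  [Module A B] [IsScalarTower ℂ A B]

/-- The axioms of a Courant `A`-algebroid on the `A`-module `B`, with Leibniz bracket
`br`, anchor `anch : B → Der(A)` (a homomorphism of Leibniz `A`-algebras),
symmetric `A`-bilinear pairing `pr`, and derivation `d : A → B` with `anch ∘ d = 0`. -/
def IsCourant (br : B →ₗ[ℂ] B →ₗ[ℂ] B) (anch : B →ₗ[ℂ] A →ₗ[ℂ] A)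
    (pr : B →ₗ[ℂ] B →ₗ[ℂ] A) (d : A →ₗ[ℂ] B) : Prop :=
  (∀ u v w : B, br u (br v w) = br (br u v) w + br v (br u w)) ∧
  (∀ (u : B) (a a' : A), anch u (a * a') = a * anch u a' + a' * anch u a) ∧
  (∀ (a : A) (u : B) (a' : A), anch (a • u) a' = a * anch u a') ∧
  (∀ (u v : B) (a : A), anch (br u v) a = anch u (anch v a) - anch v (anch u a)) ∧
  (∀ (a : A) (u v : B), pr (a • u) v = a * pr u v) ∧
  (∀ u v : B, pr u v = pr v u) ∧
  (∀ a a' : A, d (a * a') = a • d a' + a' • d a) ∧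
  (∀ a a' : A, anch (d a) a' = 0) ∧
  (∀ (u : B) (a : A) (v : B), br u (a • v) = a • br u v + (anch u a) • v) ∧
  (∀ u v w : B, pr (br u v) w + pr v (br u w) = anch u (pr v w)) ∧
  (∀ (u : B) (a : A), br u (d a) = d (anch u a)) ∧
  (∀ (u : B) (a : A), pr u (d a) = anch u a) ∧
  (∀ u v : B, br u v + br v u = d (pr u v))

end Courant

section CourantTrunc

variable {A B : Type} [CommRing A] [Algebra ℂ A] [AddCommGroup B] [Module ℂ B]
  [Module A B] [IsScalarTower ℂ A B]

/-- The 1-truncated conformal algebra `A ⊕ B` associated with a Courant `A`-algebroid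
`B`: `u₀v = [u,v]`, `u₁v = ⟨u,v⟩`, `u₀a = π(u)(a)`, `a₀u = -u₀a`, `aᵢa' = 0`. -/
def courantTrunc (br : B →ₗ[ℂ] B →ₗ[ℂ] B) (anch : B →ₗ[ℂ] A →ₗ[ℂ] A)
    (pr : B →ₗ[ℂ] B →ₗ[ℂ] A) (d : A →ₗ[ℂ] B) : OneTruncData A B :=
  { d := d, β := - (LinearMap.flip anch), γ := anch, br := br, pr := pr }

end CourantTrunc

section AuxCompute

variable {C0 C1 : Type} [AddCommGroup C0] [Module ℂ C0] [AddCommGroup C1] [Module ℂ C1]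

lemma opQ_A (T : OneTruncData C0 C1) (n : ℕ) (p : C0 × C1) (a : C0) :
    opQ T n p ((a, 0) : QC C0 C1)
      = if n = 0 then ((T.γ p.2 a, 0) : QC C0 C1) else 0 := by
  simp [opQ]

lemma opQ_B0 (T : OneTruncData C0 C1) (p : C0 × C1) (b : C1) :
    opQ T 0 p ((0, Finsupp.single 0 b) : QC C0 C1)
      = ((T.β p.1 b, Finsupp.single 0 (T.br p.2 b)) : QC C0 C1) := by
  rw [opQ]
  rw [Finsupp.sum_single_index (by simp [embQ, embQB])]
  simp [embQ, embQB, Prod.ext_iff]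

lemma opQ_B1 (T : OneTruncData C0 C1) (p : C0 × C1) (b : C1) :
    opQ T 1 p ((0, Finsupp.single 0 b) : QC C0 C1)
      = ((T.pr p.2 b, 0) : QC C0 C1) := by
  rw [opQ]
  rw [Finsupp.sum_single_index (by simp [embQ, embQB])]
  simp [embQ, embQB, Prod.ext_iff]

lemma opQ_B2 (T : OneTruncData C0 C1) (n : ℕ) (p : C0 × C1) (b : C1) :
    opQ T (n + 2) p ((0, Finsupp.single 0 b) : QC C0 C1) = 0 := by
  rw [opQ]
  rw [Finsupp.sum_single_index (by simp [embQ, embQB])]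
  simp

lemma DQ_A (T : OneTruncData C0 C1) (a : C0) :
    DQ T ((a, 0) : QC C0 C1) = ((0, Finsupp.single 0 (T.d a)) : QC C0 C1) := by
  simp [DQ, Finsupp.mapDomain_zero]

end AuxCompute

/-- Let `B` be a Courant `A`-algebroid, `𝒞` the associated vertex Lie algebra, and
`S = S(𝒞)` the associated symmetric algebra carrying the induced `ℕ`-graded vertex
Poisson structure (the products `opS n` are derivations extending the operations of
`𝒞`, and `DS` is the derivation extending `D`). With
`E₀ = span{e - 1, a·a' - aa'}` and `E₁ = span{a·b - ab}`, one has
`uₙ(E₀ ⊕ E₁) ⊆ E₀ ⊕ E₁` for every generator `u ∈ A ⊕ B` and `n ∈ ℕ`, and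
`D E₀ ⊆ E₁`. -/
theorem stmt18 {A B : Type} [CommRing A] [Algebra ℂ A] [AddCommGroup B] [Module ℂ B]
    [Module A B] [IsScalarTower ℂ A B]
    (br : B →ₗ[ℂ] B →ₗ[ℂ] B) (anch : B →ₗ[ℂ] A →ₗ[ℂ] A)
    (pr : B →ₗ[ℂ] B →ₗ[ℂ] A) (d : A →ₗ[ℂ] B)
    (hC : IsCourant br anch pr d)
    (S : Type) [CommRing S] [Algebra ℂ S]
    (ι : QC A B →ₗ[ℂ] S)
    (hUniv : ∀ (T' : Type) [CommRing T'] [Algebra ℂ T'] (f : QC A B →ₗ[ℂ] T'),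
      ∃! g : S →ₐ[ℂ] T', ∀ x, g (ι x) = f x)
    (DS : S →ₗ[ℂ] S)
    (hDSder : ∀ x y : S, DS (x * y) = x * DS y + y * DS x)
    (hDSι : ∀ x : QC A B, DS (ι x) = ι (DQ (courantTrunc br anch pr d) x))
    (opS : ℕ → S →ₗ[ℂ] S →ₗ[ℂ] S)
    (hder : ∀ (n : ℕ) (s x y : S), opS n s (x * y) = opS n s x * y + x * opS n s y)
    (hgen : ∀ (n : ℕ) (p : A × B) (x : QC A B),
      opS n (ι (genQ p)) (ι x) = ι (opQ (courantTrunc br anch pr d) n p x))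
    (ιA : A → S) (hιA : ∀ a : A, ιA a = ι ((a, 0) : QC A B))
    (ιB : B → S) (hιB : ∀ b : B, ιB b = ι ((0, Finsupp.single 0 b) : QC A B))
    (E0 E1 : Submodule ℂ S)
    (hE0 : E0 = Submodule.span ℂ
      (insert (ιA 1 - 1) {x : S | ∃ a a' : A, x = ιA a * ιA a' - ιA (a * a')}))
    (hE1 : E1 = Submodule.span ℂ
      {x : S | ∃ (a : A) (b : B), x = ιA a * ιB b - ιB (a • b)}) :
    (∀ (p : A × B) (n : ℕ), ∀ x ∈ E0 ⊔ E1, opS n (ι (genQ p)) x ∈ E0 ⊔ E1) ∧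
    (∀ x ∈ E0, DS x ∈ E1) := by
  obtain ⟨hc1, hc2, hc3, hc4, hc5, hc6, hc7, hc8, hc9, hc10, hc11, hc12, hc13⟩ := hC
  set T := courantTrunc br anch pr d with hT
  have hTβ : ∀ (a : A) (b : B), T.β a b = -(anch b a) := by
    intro a b; rw [hT]; simp [courantTrunc]
  have hTγ : T.γ = anch := by rw [hT]; simp [courantTrunc]
  have hTbr : T.br = br := by rw [hT]; simp [courantTrunc]
  have hTpr : T.pr = pr := by rw [hT]; simp [courantTrunc]
  have hTd : T.d = d := by rw [hT]; simp [courantTrunc]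
  have hιA0 : ιA 0 = 0 := by rw [hιA]; exact map_zero ι
  have hιAadd : ∀ x y : A, ιA (x + y) = ιA x + ιA y := by
    intro x y
    rw [hιA x, hιA y, hιA, show ((x + y, 0) : QC A B) = (x, 0) + (y, 0) by simp, map_add]
  have hιAneg : ∀ x : A, ιA (-x) = -ιA x := by
    intro x
    rw [hιA x, hιA, show ((-x, 0) : QC A B) = -((x, 0) : QC A B) by simp, map_neg]
  have hιB0 : ιB 0 = 0 := by rw [hιB]; simp; exact map_zero ι
  have hιBadd : ∀ x y : B, ιB (x + y) = ιB x + ιB y := by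
    intro x y
    rw [hιB x, hιB y, hιB, show ((0, Finsupp.single 0 (x + y)) : QC A B)
      = ((0, Finsupp.single 0 x) : QC A B) + ((0, Finsupp.single 0 y) : QC A B) by
        simp [Finsupp.single_add], map_add]
  have hu1 : ∀ (n : ℕ) (s : S), opS n s 1 = 0 := by
    intro n s
    have h := hder n s 1 1
    simp only [mul_one, one_mul] at h
    exact left_eq_add.mp h
  have hDS1 : DS (1 : S) = 0 := by
    have h := hDSder 1 1
    simp only [mul_one, one_mul] at h
    exact left_eq_add.mp h
  have hπ1 : ∀ u : B, anch u 1 = 0 := by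
    intro u
    have h := hc2 u 1 1
    simp only [mul_one, one_mul] at h
    exact left_eq_add.mp h
  have hd1 : d (1 : A) = 0 := by
    have h := hc7 1 1
    simp only [mul_one, one_smul] at h
    exact left_eq_add.mp h
  have hprA : ∀ (u : B) (a : A) (v : B), pr u (a • v) = a * pr u v := by
    intro u a v; rw [hc6, hc5, hc6]
  have hopA0 : ∀ (p : A × B) (a : A), opS 0 (ι (genQ p)) (ιA a) = ιA (anch p.2 a) := by
    intro p a
    rw [hιA a, hgen, opQ_A, if_pos rfl, ← hιA, hTγ]
  have hopApos : ∀ (n : ℕ), n ≠ 0 → ∀ (p : A × B) (a : A),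
      opS n (ι (genQ p)) (ιA a) = 0 := by
    intro n hn p a
    rw [hιA a, hgen, opQ_A, if_neg hn, map_zero]
  have hopB0 : ∀ (p : A × B) (b : B),
      opS 0 (ι (genQ p)) (ιB b) = -ιA (anch b p.1) + ιB (br p.2 b) := by
    intro p b
    rw [hιB b, hgen, opQ_B0,
      show ((T.β p.1 b, Finsupp.single 0 (T.br p.2 b)) : QC A B)
        = ((T.β p.1 b, 0) : QC A B) + ((0, Finsupp.single 0 (T.br p.2 b)) : QC A B) by simp,
      map_add, ← hιA, ← hιB, hTβ, hιAneg, hTbr]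
  have hopB1 : ∀ (p : A × B) (b : B),
      opS 1 (ι (genQ p)) (ιB b) = ιA (pr p.2 b) := by
    intro p b
    rw [hιB b, hgen, opQ_B1, ← hιA, hTpr]
  have hopB2 : ∀ (n : ℕ), n ≠ 0 → n ≠ 1 → ∀ (p : A × B) (b : B),
      opS n (ι (genQ p)) (ιB b) = 0 := by
    intro n hn0 hn1 p b
    obtain ⟨m, rfl⟩ : ∃ m, n = m + 2 := ⟨n - 2, by omega⟩
    rw [hιB b, hgen, opQ_B2, map_zero]
  have hDSA : ∀ a : A, DS (ιA a) = ιB (d a) := by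
    intro a
    rw [hιA a, hDSι, DQ_A, ← hιB, hTd]
  have mem0 : ∀ a a' : A, ιA a * ιA a' - ιA (a * a') ∈ E0 := by
    intro a a'
    rw [hE0]; exact Submodule.subset_span (Set.mem_insert_of_mem _ ⟨a, a', rfl⟩)
  have mem1 : ∀ (a : A) (b : B), ιA a * ιB b - ιB (a • b) ∈ E1 := by
    intro a b
    rw [hE1]; exact Submodule.subset_span ⟨a, b, rfl⟩
  constructor
  · intro p n x hx
    rcases Submodule.mem_sup.mp hx with ⟨x0, hx0, x1, hx1, rfl⟩
    clear hx
    rw [map_add]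
    refine add_mem ?_ ?_
    · rw [hE0] at hx0
      induction hx0 using Submodule.span_induction with
      | mem y hy =>
        rcases Set.mem_insert_iff.mp hy with rfl | ⟨a, a', rfl⟩
        · by_cases hn0 : n = 0
          · subst hn0
            rw [map_sub, hopA0, hu1, hπ1, hιA0, sub_zero]
            exact zero_mem _
          · rw [map_sub, hopApos n hn0, hu1, sub_zero]
            exact zero_mem _
        · by_cases hn0 : n = 0
          · subst hn0
            have key : opS 0 (ι (genQ p)) (ιA a * ιA a' - ιA (a * a'))
                = (ιA (anch p.2 a) * ιA a' - ιA (anch p.2 a * a'))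
                  + (ιA (anch p.2 a') * ιA a - ιA (anch p.2 a' * a)) := by
              rw [map_sub, hder, hopA0 p a, hopA0 p a', hopA0 p (a * a'), hc2, hιAadd,
                mul_comm a (anch p.2 a'), mul_comm a' (anch p.2 a)]
              ring
            rw [key]
            exact Submodule.mem_sup_left (add_mem (mem0 _ _) (mem0 _ _))
          · rw [map_sub, hder, hopApos n hn0 p a, hopApos n hn0 p a',
              hopApos n hn0 p (a * a'), zero_mul, mul_zero, add_zero, sub_zero]
            exact zero_mem _
      | zero => rw [map_zero]; exact zero_mem _
      | add a b _ _ iha ihb => rw [map_add]; exact add_mem iha ihb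
      | smul r a _ ih => rw [map_smul]; exact Submodule.smul_mem _ r ih
    · rw [hE1] at hx1
      induction hx1 using Submodule.span_induction with
      | mem y hy =>
        obtain ⟨a, b, rfl⟩ := hy
        by_cases hn0 : n = 0
        · subst hn0
          have key : opS 0 (ι (genQ p)) (ιA a * ιB b - ιB (a • b))
              = (ιA (anch p.2 a) * ιB b - ιB (anch p.2 a • b))
                + (ιA a * ιB (br p.2 b) - ιB (a • br p.2 b))
                - (ιA a * ιA (anch b p.1) - ιA (a * anch b p.1)) := by
            rw [map_sub, hder, hopA0 p a, hopB0 p b, hopB0 p (a • b), hc3, hc9, hιBadd]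
            ring
          rw [key]
          exact sub_mem (add_mem (Submodule.mem_sup_right (mem1 _ _))
            (Submodule.mem_sup_right (mem1 _ _))) (Submodule.mem_sup_left (mem0 _ _))
        · by_cases hn1 : n = 1
          · subst hn1
            have key : opS 1 (ι (genQ p)) (ιA a * ιB b - ιB (a • b))
                = ιA a * ιA (pr p.2 b) - ιA (a * pr p.2 b) := by
              rw [map_sub, hder, hopApos 1 one_ne_zero p a, hopB1 p b, hopB1 p (a • b),
                hprA, zero_mul, zero_add]
            rw [key]
            exact Submodule.mem_sup_left (mem0 _ _)
          · rw [map_sub, hder, hopApos n hn0 p a, hopB2 n hn0 hn1 p b,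
              hopB2 n hn0 hn1 p (a • b), zero_mul, mul_zero, add_zero, sub_zero]
            exact zero_mem _
      | zero => rw [map_zero]; exact zero_mem _
      | add a b _ _ iha ihb => rw [map_add]; exact add_mem iha ihb
      | smul r a _ ih => rw [map_smul]; exact Submodule.smul_mem _ r ih
  · intro x hx
    rw [hE0] at hx
    induction hx using Submodule.span_induction with
    | mem y hy =>
      rcases Set.mem_insert_iff.mp hy with rfl | ⟨a, a', rfl⟩
      · rw [map_sub, hDSA, hd1, hιB0, hDS1, sub_zero]
        exact zero_mem _
      · have key : DS (ιA a * ιA a' - ιA (a * a'))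
            = (ιA a * ιB (d a') - ιB (a • d a'))
              + (ιA a' * ιB (d a) - ιB (a' • d a)) := by
          rw [map_sub, hDSder, hDSA a', hDSA a, hDSA (a * a'), hc7, hιBadd]
          ring
        rw [key]
        exact add_mem (mem1 _ _) (mem1 _ _)
    | zero => rw [map_zero]; exact zero_mem _
    | add a b _ _ iha ihb => rw [map_add]; exact add_mem iha ihb
    | smul r a _ ih => rw [map_smul]; exact Submodule.smul_mem _ r ih
end
end

section
/- Let B be a Courant A-algebroid, S(𝒞) the associated ℕ-graded vertex Poisson algebra, and I_B = S(𝒞)·ℂ[D](E) where E = E_0 ⊕ E_1 with E_0 = span{e−1, a·a'−aa'} and E_1 = span{a·b−ab}. Then I_B is an ideal of the vertex Poisson algebra S(𝒞); moreover S(𝒞)_{(0)} = (I_B)_{(0)} ⊕ A and S(𝒞)_{(1)} = (I_B)_{(1)} ⊕ B, so the quotient S(𝒞)/I_B is an ℕ-graded vertex Poisson algebra with degree-zero subspace A and degree-one subspace B. -/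
open scoped BigOperators

noncomputable section

/-- The vertex Lie algebra axioms, in component form, for data `(R, d, op)`. -/
def IsVertexLieData {R : Type} [AddCommGroup R] [Module ℂ R]
    (d : R →ₗ[ℂ] R) (op : ℕ → R →ₗ[ℂ] R →ₗ[ℂ] R) : Prop :=
  (∀ a b : R, ∃ N : ℕ, ∀ n ≥ N, op n a b = 0) ∧
  (∀ a b : R, op 0 (d a) b = 0) ∧
  (∀ (a b : R) (n : ℕ), op (n + 1) (d a) b = (-(n + 1 : ℂ)) • op n a b) ∧
  (∀ (a b : R) (n N : ℕ), (∀ i ≥ N, op (n + i) b a = 0) →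
    op n a b = ∑ i ∈ Finset.range N,
      ((-1 : ℂ) ^ (n + i + 1) * ((Nat.factorial i : ℂ))⁻¹) • (⇑d)^[i] (op (n + i) b a)) ∧
  (∀ (a b c : R) (m n : ℕ),
    op m a (op n b c) - op n b (op m a c)
      = ∑ i ∈ Finset.range (m + 1), ((Nat.choose m i : ℂ)) • op (m + n - i) (op i a b) c)

/-- The vertex Poisson algebra axioms for data `(S, d, op)` on a commutative algebra. -/
def IsVertexPoissonData {S : Type} [CommRing S] [Algebra ℂ S]
    (d : S →ₗ[ℂ] S) (op : ℕ → S →ₗ[ℂ] S →ₗ[ℂ] S) : Prop :=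
  IsVertexLieData d op ∧
  (∀ (n : ℕ) (a b c : S), op n a (b * c) = op n a b * c + b * op n a c)

set_option maxHeartbeats 2000000 in
/-- Let `B` be a Courant `A`-algebroid and `S = S(𝒞)` the associated `ℕ`-graded
vertex Poisson algebra. With `E = E₀ ⊕ E₁` as above and `I_B = S·ℂ[D](E)`,
`I_B` is an ideal of the vertex Poisson algebra `S`; moreover
`S₍₀₎ = (I_B)₍₀₎ ⊕ A` and `S₍₁₎ = (I_B)₍₁₎ ⊕ B`, so the quotient `S/I_B` is an
`ℕ`-graded vertex Poisson algebra with degree-zero subspace `A` and degree-one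
subspace `B`. -/
theorem stmt19 {A B : Type} [CommRing A] [Algebra ℂ A] [AddCommGroup B] [Module ℂ B]
    [Module A B] [IsScalarTower ℂ A B]
    (br : B →ₗ[ℂ] B →ₗ[ℂ] B) (anch : B →ₗ[ℂ] A →ₗ[ℂ] A)
    (pr : B →ₗ[ℂ] B →ₗ[ℂ] A) (d : A →ₗ[ℂ] B)
    (hC : IsCourant br anch pr d)
    (S : Type) [CommRing S] [Algebra ℂ S]
    (ι : QC A B →ₗ[ℂ] S)
    (hUniv : ∀ (T' : Type) [CommRing T'] [Algebra ℂ T'] (f : QC A B →ₗ[ℂ] T'),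
      ∃! g : S →ₐ[ℂ] T', ∀ x, g (ι x) = f x)
    (DS : S →ₗ[ℂ] S)
    (hDSder : ∀ x y : S, DS (x * y) = x * DS y + y * DS x)
    (hDSι : ∀ x : QC A B, DS (ι x) = ι (DQ (courantTrunc br anch pr d) x))
    (opS : ℕ → S →ₗ[ℂ] S →ₗ[ℂ] S)
    (hVP : IsVertexPoissonData DS opS)
    (hgen : ∀ (n : ℕ) (p : A × B) (x : QC A B),
      opS n (ι (genQ p)) (ι x) = ι (opQ (courantTrunc br anch pr d) n p x))
    (ιA : A → S) (hιA : ∀ a : A, ιA a = ι ((a, 0) : QC A B))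
    (ιB : B → S) (hιB : ∀ b : B, ιB b = ι ((0, Finsupp.single 0 b) : QC A B))
    (E0 E1 : Submodule ℂ S)
    (hE0 : E0 = Submodule.span ℂ
      (insert (ιA 1 - 1) {x : S | ∃ a a' : A, x = ιA a * ιA a' - ιA (a * a')}))
    (hE1 : E1 = Submodule.span ℂ
      {x : S | ∃ (a : A) (b : B), x = ιA a * ιB b - ιB (a • b)})
    (IB : Ideal S)
    (hIB : IB = Ideal.span
      {x : S | ∃ (m : ℕ) (y : S), y ∈ (E0 ⊔ E1 : Submodule ℂ S) ∧ x = (⇑DS)^[m] y})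
    (gr : ℕ → Submodule ℂ S)
    (hgr0 : gr 0 = Subalgebra.toSubmodule (Algebra.adjoin ℂ (Set.range ιA)))
    (hgr1 : gr 1 = gr 0 * Submodule.span ℂ (Set.range ιB)) :
    -- I_B is an ideal of the vertex Poisson algebra S:
    (∀ x ∈ IB, DS x ∈ IB) ∧
    (∀ (s : S) (n : ℕ), ∀ x ∈ IB, opS n s x ∈ IB) ∧
    -- S₍₀₎ = (I_B)₍₀₎ ⊕ A:
    ((IB.restrictScalars ℂ ⊓ gr 0) ⊔ Submodule.span ℂ (Set.range ιA) = gr 0) ∧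
    ((IB.restrictScalars ℂ ⊓ gr 0) ⊓ Submodule.span ℂ (Set.range ιA) = ⊥) ∧
    -- S₍₁₎ = (I_B)₍₁₎ ⊕ B:
    ((IB.restrictScalars ℂ ⊓ gr 1) ⊔ Submodule.span ℂ (Set.range ιB) = gr 1) ∧
    ((IB.restrictScalars ℂ ⊓ gr 1) ⊓ Submodule.span ℂ (Set.range ιB) = ⊥) := by
  classical
  obtain ⟨⟨hfin, hD0, hD1, hskew, _hjac⟩, hder⟩ := hVP
  obtain ⟨cJac, cAnchDer, cAnchSmul, cAnchBr, cPrSmul, cPrSym, cD, cAnchD, cBrSmul,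
    cPrBr, cBrD, cPrD, cBrSym⟩ := hC
  -- basic identities
  have hds1 : DS (1:S) = 0 := by
    have h := hDSder 1 1
    rw [mul_one, one_mul] at h
    have h2 : DS (1:S) + 0 = DS 1 + DS 1 := by rw [add_zero]; exact h
    exact (add_left_cancel h2).symm
  have hd1 : d (1:A) = 0 := by
    have h := cD 1 1
    simp only [mul_one, one_smul] at h
    have h2 : d (1:A) + 0 = d 1 + d 1 := by rw [add_zero]; exact h
    exact (add_left_cancel h2).symm
  have hanch1 : ∀ u : B, anch u 1 = 0 := by
    intro u
    have h := cAnchDer u 1 1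
    simp only [mul_one, one_mul] at h
    have h2 : anch u (1:A) + 0 = anch u 1 + anch u 1 := by rw [add_zero]; exact h
    exact (add_left_cancel h2).symm
  have hopy1 : ∀ (n : ℕ) (y : S), opS n y (1:S) = 0 := by
    intro n y
    have h := hder n y 1 1
    simp only [mul_one, one_mul] at h
    have h2 : opS n y (1:S) + 0 = opS n y 1 + opS n y 1 := by rw [add_zero]; exact h
    exact (add_left_cancel h2).symm
  have hop1y : ∀ (n : ℕ) (y : S), opS n (1:S) y = 0 := by
    intro n y
    rw [hskew 1 y n 0 (fun i _ => hopy1 _ _)]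
    simp
  -- membership helpers
  have hmemIB : ∀ y ∈ (E0 ⊔ E1 : Submodule ℂ S), y ∈ IB := by
    intro y hy
    rw [hIB]
    exact Ideal.subset_span ⟨0, y, hy, rfl⟩
  have hmemE0 : ∀ a a' : A, ιA a * ιA a' - ιA (a * a') ∈ (E0 ⊔ E1 : Submodule ℂ S) := by
    intro a a'
    apply Submodule.mem_sup_left
    rw [hE0]
    exact Submodule.subset_span (Set.mem_insert_iff.mpr (Or.inr ⟨a, a', rfl⟩))
  have hmemE0one : ιA 1 - 1 ∈ (E0 ⊔ E1 : Submodule ℂ S) := by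
    apply Submodule.mem_sup_left
    rw [hE0]
    exact Submodule.subset_span (Set.mem_insert _ _)
  have hmemE1 : ∀ (a : A) (b : B), ιA a * ιB b - ιB (a • b) ∈ (E0 ⊔ E1 : Submodule ℂ S) := by
    intro a b
    apply Submodule.mem_sup_right
    rw [hE1]
    exact Submodule.subset_span ⟨a, b, rfl⟩
  -- part 1 : DS-stability
  have part1 : ∀ x ∈ IB, DS x ∈ IB := by
    intro x hx
    rw [hIB] at hx ⊢
    refine Submodule.span_induction (p := fun x _ => DS x ∈ Ideal.span
      {x : S | ∃ (m : ℕ) (y : S), y ∈ (E0 ⊔ E1 : Submodule ℂ S) ∧ x = (⇑DS)^[m] y})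
      ?_ ?_ ?_ ?_ hx
    · rintro x ⟨m, y, hy, rfl⟩
      exact Ideal.subset_span ⟨m+1, y, hy, (Function.iterate_succ_apply' _ _ _).symm⟩
    · simp
    · intro a b _ _ ha hb; rw [map_add]; exact add_mem ha hb
    · intro a x hxmem hDx
      rw [smul_eq_mul, hDSder a x]
      exact add_mem (Ideal.mul_mem_left _ _ hDx) (Ideal.mul_mem_right _ _ hxmem)
  have hIter : ∀ (m : ℕ) (x : S), x ∈ IB → (⇑DS)^[m] x ∈ IB := by
    intro m
    induction m with
    | zero => intro x hx; exact hx
    | succ m ih =>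
      intro x hx
      rw [Function.iterate_succ_apply']
      exact part1 _ (ih x hx)
  have hsmulIB : ∀ (c : ℂ) (x : S), x ∈ IB → c • x ∈ IB := by
    intro c x hx
    exact Submodule.smul_of_tower_mem _ c hx
  have FLIP : ∀ (a b : S) (n : ℕ), (∀ m, opS m b a ∈ IB) → opS n a b ∈ IB := by
    intro a b n h
    obtain ⟨N, hN⟩ := hfin b a
    rw [hskew a b n N (fun i hi => hN _ (le_trans hi (Nat.le_add_left _ _)))]
    exact Submodule.sum_mem _ fun i _ => hsmulIB _ _ (hIter i _ (h _))
  have hDshift : ∀ (s : S) (m : ℕ) (u : S), (∀ j, opS j u s ∈ IB) →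
      ∀ k, opS k ((⇑DS)^[m] u) s ∈ IB := by
    intro s m
    induction m with
    | zero => intro u h k; exact h k
    | succ m ih =>
      intro u h k
      rw [Function.iterate_succ_apply]
      refine ih (DS u) (fun j => ?_) k
      cases j with
      | zero => rw [hD0]; exact zero_mem _
      | succ j => rw [hD1]; exact hsmulIB _ _ (h j)
  have hsingle : ∀ (n : ℕ) (b : B), ι ((0, Finsupp.single n b) : QC A B)
      = (⇑DS)^[n] (ι (genQ ((0:A), b))) := by
    intro n b
    induction n with
    | zero => rfl
    | succ n ih =>
      rw [Function.iterate_succ_apply', ← ih, hDSι]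
      congr 1
      symm
      show DQ (courantTrunc br anch pr d) ((0 : A), Finsupp.single n b)
        = ((0 : A), Finsupp.single (n+1) b)
      unfold DQ
      refine Prod.ext rfl ?_
      show Finsupp.single 0 (d (0:A)) + Finsupp.mapDomain (· + 1) (Finsupp.single n b)
        = Finsupp.single (n+1) b
      rw [map_zero, Finsupp.single_zero, zero_add, Finsupp.mapDomain_single]
  have hdec : ∀ x : QC A B, ι x = ι (genQ (x.1, (0:B)))
      + x.2.sum fun n b => (⇑DS)^[n] (ι (genQ ((0:A), b))) := by
    intro x
    have h1 : genQ ((x.1, (0:B)) : A × B) = ((x.1, 0) : QC A B) := by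
      show ((x.1, Finsupp.single 0 (0:B)) : QC A B) = (x.1, 0)
      rw [Finsupp.single_zero]
    rw [h1]
    have h2 : x = ((x.1, 0) : QC A B) + ((0, x.2) : QC A B) := by
      refine Prod.ext ?_ ?_ <;> simp
    have h3 : ((0, x.2) : QC A B) = x.2.sum fun n b => ((0, Finsupp.single n b) : QC A B) := by
      refine Prod.ext ?_ ?_
      · rw [Finsupp.sum]
        simp [Prod.fst_sum]
      · rw [Finsupp.sum]
        simp [Prod.snd_sum]
        exact (Finsupp.sum_single x.2).symm
    conv_lhs => rw [h2, map_add]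
    congr 1
    rw [h3, map_finsuppSum]
    exact Finsupp.sum_congr fun n hn => hsingle n _
  have genEq : Algebra.adjoin ℂ (Set.range ⇑ι) = ⊤ := by
    set K := Algebra.adjoin ℂ (Set.range ⇑ι) with hK
    let f' : QC A B →ₗ[ℂ] K :=
      LinearMap.codRestrict (Subalgebra.toSubmodule K) ι
        (fun x => Algebra.subset_adjoin ⟨x, rfl⟩)
    obtain ⟨g1, hg1, _⟩ := hUniv K f'
    obtain ⟨g0, hg0, hg0u⟩ := hUniv S ι
    have e1 : K.val.comp g1 = g0 := hg0u (K.val.comp g1) (fun x => by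
      show K.val (g1 (ι x)) = ι x
      rw [hg1 x]
      rfl)
    have e2 : AlgHom.id ℂ S = g0 := hg0u (AlgHom.id ℂ S) (fun x => rfl)
    rw [eq_top_iff]
    intro s _
    have : K.val (g1 s) = s := by
      have := DFunLike.congr_fun (e1.trans e2.symm) s
      exact this
    rw [← this]
    exact (g1 s).2
  have hadj : ∀ s : S, s ∈ Algebra.adjoin ℂ (Set.range ⇑ι) := by
    intro s; rw [genEq]; trivial
  have hιAadd : ∀ z w : A, ιA (z + w) = ιA z + ιA w := by
    intro z w
    rw [hιA, hιA, hιA, ← map_add]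
    exact congrArg ι (Prod.ext rfl (zero_add 0).symm)
  have hιA0 : ιA 0 = 0 := by rw [hιA]; exact map_zero ι
  have hιBadd : ∀ z w : B, ιB (z + w) = ιB z + ιB w := by
    intro z w
    rw [hιB, hιB, hιB, ← map_add]
    congr 1
    refine Prod.ext (by simp) ?_
    simp [Finsupp.single_add]
  have hιAneg : ∀ z : A, ιA (-z) = - ιA z := by
    intro z
    rw [hιA, hιA, ← map_neg]
    exact congrArg ι (Prod.ext rfl neg_zero.symm)
  have hembQ0 : ∀ m : ℕ, embQ (courantTrunc br anch pr d) m (0:A) = 0 := by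
    intro m
    match m with
    | 0 => rfl
    | (m+1) =>
      show ((0, Finsupp.single m (d (0:A))) : QC A B) = 0
      rw [map_zero, Finsupp.single_zero]
      rfl
  have hembQB0 : ∀ m : ℕ, embQB m (0:B) = (0 : QC A B) := by
    intro m
    show ((0, Finsupp.single m (0:B)) : QC A B) = 0
    rw [Finsupp.single_zero]
    rfl
  have hopAQ : ∀ (k : ℕ) (p : A × B) (a : A),
      opS k (ι (genQ p)) (ιA a) = if k = 0 then ιA (anch p.2 a) else 0 := by
    intro k p a
    rw [hιA, hgen]
    have h0 : opQ (courantTrunc br anch pr d) k p ((a, 0) : QC A B)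
        = if k = 0 then (((anch p.2 a, 0)) : QC A B) else 0 := by
      unfold opQ
      rw [Finsupp.sum_zero_index, add_zero]
      rfl
    rw [h0]
    split
    · rw [hιA]
    · exact map_zero ι
  have hopBQ : ∀ (k : ℕ) (p : A × B) (b : B),
      opS k (ι (genQ p)) (ιB b) =
        if k = 0 then (- ιA (anch b p.1) + ιB (br p.2 b))
        else if k = 1 then ιA (pr p.2 b) else 0 := by
    intro k p b
    rw [hιB, hgen]
    have h0 : opQ (courantTrunc br anch pr d) k p ((0, Finsupp.single 0 b) : QC A B)
        = if k = 0 then ((((- anch b p.1 : A), 0) : QC A B) + ((0, Finsupp.single 0 (br p.2 b)) : QC A B))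
          else if k = 1 then (((pr p.2 b, 0)) : QC A B) else 0 := by
      unfold opQ
      rw [Finsupp.sum_single_index]
      · match k with
        | 0 =>
          simp [embQ, embQB, courantTrunc, Nat.factorial]
        | 1 =>
          simp [embQ, embQB, courantTrunc, Nat.factorial]
        | (k+2) =>
          simp [embQ, embQB, courantTrunc, Nat.factorial,
            show ¬ (k + 2 ≤ 0) by omega, show ¬ (k + 2 ≤ 0 + 1) by omega]
      · simp only [map_zero, hembQ0, hembQB0, add_zero, zero_add, smul_zero, ite_self]
    rw [h0]
    match k with
    | 0 =>
      simp only [if_pos rfl, if_true, eq_self_iff_true, map_add]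
      rw [hιB, ← hιAneg, hιA]
    | 1 =>
      simp only [if_neg one_ne_zero, if_pos rfl, if_true, eq_self_iff_true]
      rw [hιA]
    | (k+2) =>
      simp only [if_neg (by omega : ¬ (k+2 = 0)), if_neg (by omega : ¬ (k+2 = 1))]
      exact map_zero ι
  -- the three generator computations
  have hC0a : ∀ (p : A × B) (k : ℕ), opS k (ι (genQ p)) (ιA 1 - 1) ∈ IB := by
    intro p k
    rw [map_sub, hopAQ, hopy1]
    split
    · rw [hanch1, hιA0, sub_zero]; exact zero_mem _
    · rw [sub_zero]; exact zero_mem _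
  have hC0b : ∀ (a a' : A) (p : A × B) (k : ℕ),
      opS k (ι (genQ p)) (ιA a * ιA a' - ιA (a * a')) ∈ IB := by
    intro a a' p k
    rw [map_sub, hder, hopAQ, hopAQ, hopAQ]
    match k with
    | 0 =>
      simp only [if_pos rfl, if_true, eq_self_iff_true]
      have hπ : anch p.2 (a * a') = a * anch p.2 a' + a' * anch p.2 a := cAnchDer p.2 a a'
      have key : ιA (anch p.2 a) * ιA a' + ιA a * ιA (anch p.2 a') - ιA (anch p.2 (a * a'))
          = (ιA (anch p.2 a) * ιA a' - ιA (anch p.2 a * a'))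
            + (ιA a * ιA (anch p.2 a') - ιA (a * anch p.2 a')) := by
        rw [hπ, hιAadd, mul_comm (anch p.2 a) a']
        ring
      rw [key]
      exact add_mem (hmemIB _ (hmemE0 _ _)) (hmemIB _ (hmemE0 _ _))
    | (k+1) =>
      simp only [if_neg (Nat.succ_ne_zero k)]
      simp only [zero_mul, mul_zero, add_zero, sub_zero]
      exact zero_mem _
  have hC1 : ∀ (a : A) (b : B) (p : A × B) (k : ℕ),
      opS k (ι (genQ p)) (ιA a * ιB b - ιB (a • b)) ∈ IB := by
    intro a b p k
    rw [map_sub, hder, hopAQ, hopBQ, hopBQ]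
    match k with
    | 0 =>
      simp only [if_pos rfl, if_true, eq_self_iff_true]
      have h1 : anch (a • b) p.1 = a * anch b p.1 := cAnchSmul a b p.1
      have h2 : br p.2 (a • b) = a • br p.2 b + anch p.2 a • b := cBrSmul p.2 a b
      have key : ιA (anch p.2 a) * ιB b + ιA a * (-ιA (anch b p.1) + ιB (br p.2 b))
            - (-ιA (anch (a • b) p.1) + ιB (br p.2 (a • b)))
          = (ιA (anch p.2 a) * ιB b - ιB (anch p.2 a • b))
            + (ιA a * ιB (br p.2 b) - ιB (a • br p.2 b))
            + (-(ιA a * ιA (anch b p.1) - ιA (a * anch b p.1))) := by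
        rw [h1, h2, hιBadd]
        ring
      rw [key]
      exact add_mem (add_mem (hmemIB _ (hmemE1 _ _)) (hmemIB _ (hmemE1 _ _)))
        (neg_mem (hmemIB _ (hmemE0 _ _)))
    | 1 =>
      simp only [if_neg one_ne_zero, if_pos rfl, if_true, eq_self_iff_true]
      have h3 : pr p.2 (a • b) = a * pr p.2 b := by
        rw [cPrSym, cPrSmul, cPrSym]
      have key : (0:S) * ιB b + ιA a * ιA (pr p.2 b) - ιA (pr p.2 (a • b))
          = ιA a * ιA (pr p.2 b) - ιA (a * pr p.2 b) := by
        rw [h3]; ring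
      rw [key]
      exact hmemIB _ (hmemE0 _ _)
    | (k+2) =>
      simp only [if_neg (by omega : ¬ (k+2 = 0)), if_neg (by omega : ¬ (k+2 = 1))]
      simp only [zero_mul, mul_zero, add_zero, sub_zero]
      exact zero_mem _
  -- main closure lemma: second slot
  have hKmain : ∀ y : S, (∀ (p : A × B) (k : ℕ), opS k (ι (genQ p)) y ∈ IB) →
      ∀ (s : S) (k : ℕ), opS k s y ∈ IB := by
    intro y hy s
    refine Algebra.adjoin_induction (p := fun x _ => ∀ k, opS k x y ∈ IB)
      ?_ ?_ ?_ ?_ (hadj s)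
    · rintro x ⟨x₀, rfl⟩ k
      rw [hdec x₀, map_add, LinearMap.add_apply]
      refine add_mem (hy _ k) ?_
      rw [Finsupp.sum, map_sum, LinearMap.sum_apply]
      refine Submodule.sum_mem _ fun n hn => ?_
      exact hDshift y n _ (fun j => hy _ j) k
    · intro r k
      rw [Algebra.algebraMap_eq_smul_one, map_smul, LinearMap.smul_apply, hop1y]
      rw [smul_zero]
      exact zero_mem _
    · intro x₁ x₂ _ _ h1 h2 k
      rw [map_add, LinearMap.add_apply]
      exact add_mem (h1 k) (h2 k)
    · intro x₁ x₂ _ _ h1 h2 k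
      refine FLIP _ _ _ (fun m => ?_)
      rw [hder]
      exact add_mem (Ideal.mul_mem_right _ _ (FLIP _ _ _ (fun m' => h1 m')))
        (Ideal.mul_mem_left _ _ (FLIP _ _ _ (fun m' => h2 m')))
  -- elements of E act into IB (first slot)
  have hEIB : ∀ y ∈ (E0 ⊔ E1 : Submodule ℂ S), ∀ (s : S) (k : ℕ), opS k y s ∈ IB := by
    intro y hy
    have hyspan : y ∈ Submodule.span ℂ
        ((insert (ιA 1 - 1) {x : S | ∃ a a' : A, x = ιA a * ιA a' - ιA (a * a')})
          ∪ {x : S | ∃ (a : A) (b : B), x = ιA a * ιB b - ιB (a • b)}) := by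
      rw [Submodule.span_union, ← hE0, ← hE1]
      exact hy
    refine Submodule.span_induction (p := fun y _ => ∀ (s : S) (k : ℕ), opS k y s ∈ IB)
      ?_ ?_ ?_ ?_ hyspan
    · rintro z (hz | ⟨a, b, rfl⟩)
      · rcases Set.mem_insert_iff.mp hz with rfl | ⟨a, a', rfl⟩
        · intro s k
          exact FLIP _ _ _ (fun m => hKmain _ (fun p k' => hC0a p k') s m)
        · intro s k
          exact FLIP _ _ _ (fun m => hKmain _ (fun p k' => hC0b a a' p k') s m)
      · intro s k
        exact FLIP _ _ _ (fun m => hKmain _ (fun p k' => hC1 a b p k') s m)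
    · intro s k
      rw [map_zero, LinearMap.zero_apply]
      exact zero_mem _
    · intro u v _ _ h1 h2 s k
      rw [map_add, LinearMap.add_apply]
      exact add_mem (h1 s k) (h2 s k)
    · intro c u _ h1 s k
      rw [map_smul, LinearMap.smul_apply]
      exact hsmulIB _ _ (h1 s k)
  -- first slot in IB
  have hQ : ∀ x ∈ IB, ∀ (k : ℕ) (s : S), opS k x s ∈ IB := by
    intro x hx
    rw [hIB] at hx
    refine Submodule.span_induction (p := fun x _ => ∀ (k : ℕ) (s : S), opS k x s ∈ IB)
      ?_ ?_ ?_ ?_ hx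
    · rintro z ⟨m, y, hy, rfl⟩ k s
      exact hDshift s m y (fun j => hEIB y hy s j) k
    · intro k s
      rw [map_zero, LinearMap.zero_apply]
      exact zero_mem _
    · intro u v _ _ h1 h2 k s
      rw [map_add, LinearMap.add_apply]
      exact add_mem (h1 k s) (h2 k s)
    · intro a x hxmem ih k s
      have hxIB : x ∈ IB := by rw [hIB]; exact hxmem
      rw [smul_eq_mul]
      refine FLIP _ _ _ (fun m => ?_)
      rw [hder]
      exact add_mem (Ideal.mul_mem_left _ _ hxIB)
        (Ideal.mul_mem_left _ _ (FLIP _ _ _ (fun m' => ih m' s)))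
  have part2 : ∀ (s : S) (n : ℕ), ∀ x ∈ IB, opS n s x ∈ IB := by
    intro s n x hx
    exact FLIP _ _ _ (fun m => hQ x hx m s)
  -- the square-zero extension model for the quotient
  letI : Module Aᵐᵒᵖ B := Module.compHom B ((RingHom.id A).fromOpposite mul_comm)
  haveI : IsCentralScalar A B := ⟨fun r m => rfl⟩
  have hop0smul : ∀ (m : B), (MulOpposite.op (0:A)) • m = (0:B) := by
    intro m
    show (0:A) • m = 0
    exact zero_smul A m
  let f : QC A B →ₗ[ℂ] TrivSqZeroExt A B :=
    { toFun := fun x => TrivSqZeroExt.inl x.1 + TrivSqZeroExt.inr (x.2 0)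
      map_add' := by
        intro x y
        apply TrivSqZeroExt.ext <;>
          simp [TrivSqZeroExt.fst_add, TrivSqZeroExt.snd_add]
      map_smul' := by
        intro c x
        apply TrivSqZeroExt.ext <;>
          simp [TrivSqZeroExt.fst_smul, TrivSqZeroExt.snd_smul] }
  have hf : ∀ x : QC A B, f x = TrivSqZeroExt.inl x.1 + TrivSqZeroExt.inr (x.2 0) := fun _ => rfl
  obtain ⟨g, hg, _⟩ := hUniv (TrivSqZeroExt A B) f
  have hmulinr : ∀ (t : TrivSqZeroExt A B) (m : B),
      t * TrivSqZeroExt.inr m = TrivSqZeroExt.inr (t.fst • m) := by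
    intro t m
    apply TrivSqZeroExt.ext
    · rw [TrivSqZeroExt.fst_mul, TrivSqZeroExt.fst_inr, TrivSqZeroExt.fst_inr, mul_zero]
    · rw [TrivSqZeroExt.snd_mul, TrivSqZeroExt.snd_inr, TrivSqZeroExt.snd_inr,
        TrivSqZeroExt.fst_inr, hop0smul, add_zero]
  have hgιA : ∀ a : A, g (ιA a) = TrivSqZeroExt.inl a := by
    intro a
    rw [hιA, hg, hf]
    show TrivSqZeroExt.inl a + TrivSqZeroExt.inr ((0 : ℕ →₀ B) 0) = TrivSqZeroExt.inl a
    rw [Finsupp.coe_zero, Pi.zero_apply, TrivSqZeroExt.inr_zero, add_zero]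
  have hgιB : ∀ b : B, g (ιB b) = TrivSqZeroExt.inr b := by
    intro b
    rw [hιB, hg, hf]
    show TrivSqZeroExt.inl (0:A) + TrivSqZeroExt.inr (Finsupp.single 0 b 0) = TrivSqZeroExt.inr b
    rw [TrivSqZeroExt.inl_zero, zero_add, Finsupp.single_eq_same]
  have hgDS : ∀ s : S, g (DS s) = TrivSqZeroExt.inr (d (g s).fst) := by
    intro s
    refine Algebra.adjoin_induction (p := fun x _ => g (DS x) = TrivSqZeroExt.inr (d (g x).fst))
      ?_ ?_ ?_ ?_ (hadj s)
    · rintro x ⟨x₀, rfl⟩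
      rw [hDSι, hg, hg, hf, hf]
      have hDQ1 : (DQ (courantTrunc br anch pr d) x₀).1 = 0 := rfl
      have hDQ2 : (DQ (courantTrunc br anch pr d) x₀).2 0 = d x₀.1 := by
        show ((Finsupp.single 0 (d x₀.1) + Finsupp.mapDomain (· + 1) x₀.2 : ℕ →₀ B)) 0 = d x₀.1
        rw [Finsupp.add_apply, Finsupp.single_eq_same,
          Finsupp.mapDomain_notin_range _ _ (by rintro ⟨n, hn⟩; exact Nat.succ_ne_zero n hn), add_zero]
      rw [hDQ1, hDQ2, TrivSqZeroExt.inl_zero, zero_add]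
      congr 1
      rw [TrivSqZeroExt.fst_add, TrivSqZeroExt.fst_inl, TrivSqZeroExt.fst_inr, add_zero]
    · intro r
      have h1 : DS ((algebraMap ℂ S) r) = 0 := by
        rw [Algebra.algebraMap_eq_smul_one, map_smul, hds1, smul_zero]
      rw [h1, map_zero, AlgHom.commutes, TrivSqZeroExt.algebraMap_eq_inl',
        TrivSqZeroExt.fst_inl]
      have h2 : d ((algebraMap ℂ A) r) = 0 := by
        rw [Algebra.algebraMap_eq_smul_one, map_smul, hd1, smul_zero]
      rw [h2, TrivSqZeroExt.inr_zero]
    · intro x y _ _ hx hy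
      rw [map_add, map_add, hx, hy, map_add, TrivSqZeroExt.fst_add, map_add,
        TrivSqZeroExt.inr_add]
    · intro x y _ _ hx hy
      rw [hDSder, map_add, map_mul, map_mul, hx, hy, hmulinr, hmulinr]
      have h3 : d ((g (x*y)).fst) = (g x).fst • d ((g y).fst) + (g y).fst • d ((g x).fst) := by
        rw [map_mul, TrivSqZeroExt.fst_mul]
        exact cD _ _
      rw [h3, TrivSqZeroExt.inr_add]
  have hgE : ∀ y ∈ (E0 ⊔ E1 : Submodule ℂ S), g y = 0 := by
    intro y hy
    have hyspan : y ∈ Submodule.span ℂ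
        ((insert (ιA 1 - 1) {x : S | ∃ a a' : A, x = ιA a * ιA a' - ιA (a * a')})
          ∪ {x : S | ∃ (a : A) (b : B), x = ιA a * ιB b - ιB (a • b)}) := by
      rw [Submodule.span_union, ← hE0, ← hE1]
      exact hy
    refine Submodule.span_induction (p := fun y _ => g y = 0) ?_ ?_ ?_ ?_ hyspan
    · rintro z (hz | ⟨a, b, rfl⟩)
      · rcases Set.mem_insert_iff.mp hz with rfl | ⟨a, a', rfl⟩
        · rw [map_sub, map_one, hgιA, TrivSqZeroExt.inl_one, sub_self]
        · rw [map_sub, map_mul, hgιA, hgιA, hgιA, TrivSqZeroExt.inl_mul_inl, sub_self]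
      · rw [map_sub, map_mul, hgιA, hgιB, hgιB, TrivSqZeroExt.inl_mul_inr, sub_self]
    · exact map_zero g
    · intro u v _ _ h1 h2
      rw [map_add, h1, h2, add_zero]
    · intro c u _ h1
      rw [map_smul, h1, smul_zero]
  have hgIB : ∀ x ∈ IB, g x = 0 := by
    intro x hx
    rw [hIB] at hx
    refine Submodule.span_induction (p := fun x _ => g x = 0) ?_ ?_ ?_ ?_ hx
    · rintro z ⟨m, y, hy, rfl⟩
      induction m with
      | zero => exact hgE y hy
      | succ m ih =>
        rw [Function.iterate_succ_apply', hgDS, ih, TrivSqZeroExt.fst_zero, map_zero,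
          TrivSqZeroExt.inr_zero]
    · exact map_zero g
    · intro u v _ _ h1 h2
      rw [map_add, h1, h2, add_zero]
    · intro a x _ h1
      rw [smul_eq_mul, map_mul, h1, mul_zero]
  -- the ranges of ιA and ιB as submodules
  have hspanA : Submodule.span ℂ (Set.range ιA)
      = LinearMap.range (ι ∘ₗ LinearMap.inl ℂ A (ℕ →₀ B)) := by
    have h1 : Set.range ιA = Set.range ⇑(ι ∘ₗ LinearMap.inl ℂ A (ℕ →₀ B)) := by
      have : ιA = fun a => ι ((a, 0) : QC A B) := funext hιA
      rw [this]
      rfl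
    rw [h1, ← LinearMap.coe_range, Submodule.span_eq]
  have hspanB : Submodule.span ℂ (Set.range ιB)
      = LinearMap.range (ι ∘ₗ (LinearMap.inr ℂ A (ℕ →₀ B)) ∘ₗ (Finsupp.lsingle 0)) := by
    have h1 : Set.range ιB = Set.range ⇑(ι ∘ₗ (LinearMap.inr ℂ A (ℕ →₀ B)) ∘ₗ (Finsupp.lsingle 0)) := by
      have : ιB = fun b => ι ((0, Finsupp.single 0 b) : QC A B) := funext hιB
      rw [this]
      rfl
    rw [h1, ← LinearMap.coe_range, Submodule.span_eq]
  have hgr0mem : ∀ a : A, ιA a ∈ gr 0 := by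
    intro a
    rw [hgr0, Subalgebra.mem_toSubmodule]
    exact Algebra.subset_adjoin ⟨a, rfl⟩
  have hgr0one : (1:S) ∈ gr 0 := by
    rw [hgr0, Subalgebra.mem_toSubmodule]
    exact one_mem (Algebra.adjoin ℂ (Set.range ιA))
  have hgr0mul : ∀ u v : S, u ∈ gr 0 → v ∈ gr 0 → u * v ∈ gr 0 := by
    intro u v hu hv
    rw [hgr0, Subalgebra.mem_toSubmodule] at hu hv ⊢
    exact mul_mem hu hv
  have hIBr : ∀ x : S, x ∈ IB.restrictScalars ℂ ↔ x ∈ IB := fun x => Iff.rfl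
  have hAle : Submodule.span ℂ (Set.range ιA) ≤ gr 0 := by
    rw [Submodule.span_le]
    rintro _ ⟨a, rfl⟩
    exact hgr0mem a
  -- part 3
  have part3 : (IB.restrictScalars ℂ ⊓ gr 0) ⊔ Submodule.span ℂ (Set.range ιA) = gr 0 := by
    apply le_antisymm
    · exact sup_le inf_le_right hAle
    · intro x hx
      have hx' : x ∈ Algebra.adjoin ℂ (Set.range ιA) := by
        rw [hgr0, Subalgebra.mem_toSubmodule] at hx
        exact hx
      refine Algebra.adjoin_induction
        (p := fun x _ => x ∈ (IB.restrictScalars ℂ ⊓ gr 0) ⊔ Submodule.span ℂ (Set.range ιA))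
        ?_ ?_ ?_ ?_ hx'
      · intro z hz
        exact Submodule.mem_sup_right (Submodule.subset_span hz)
      · intro r
        rw [Algebra.algebraMap_eq_smul_one]
        refine Submodule.smul_mem _ _ ?_
        have h1 : (1:S) = ιA 1 - (ιA 1 - 1) := by ring
        rw [h1]
        refine sub_mem (Submodule.mem_sup_right (Submodule.subset_span ⟨1, rfl⟩)) ?_
        refine Submodule.mem_sup_left (Submodule.mem_inf.mpr ⟨?_, ?_⟩)
        · exact hmemIB _ hmemE0one
        · exact sub_mem (hgr0mem 1) hgr0one
      · intro u v _ _ h1 h2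
        exact add_mem h1 h2
      · intro u v hu hv h1 h2
        have hugr : u ∈ gr 0 := by rw [hgr0, Subalgebra.mem_toSubmodule]; exact hu
        have hvgr : v ∈ gr 0 := by rw [hgr0, Subalgebra.mem_toSubmodule]; exact hv
        obtain ⟨i₁, hi₁, s₁, hs₁, rfl⟩ := Submodule.mem_sup.mp h1
        obtain ⟨i₂, hi₂, s₂, hs₂, rfl⟩ := Submodule.mem_sup.mp h2
        have hi₁I : i₁ ∈ IB := (Submodule.mem_inf.mp hi₁).1
        have hi₂I : i₂ ∈ IB := (Submodule.mem_inf.mp hi₂).1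
        have hi₂g : i₂ ∈ gr 0 := (Submodule.mem_inf.mp hi₂).2
        have hs₁g : s₁ ∈ gr 0 := hAle hs₁
        have hs₂g : s₂ ∈ gr 0 := hAle hs₂
        have hsplit : (i₁ + s₁) * (i₂ + s₂) = (i₁ * (i₂ + s₂) + s₁ * i₂) + s₁ * s₂ := by ring
        rw [hsplit]
        refine add_mem (Submodule.mem_sup_left (Submodule.mem_inf.mpr ⟨?_, ?_⟩)) ?_
        · exact add_mem (Ideal.mul_mem_right _ _ hi₁I) (Ideal.mul_mem_left _ _ hi₂I)
        · exact add_mem (hgr0mul _ _ (Submodule.mem_inf.mp hi₁).2 hvgr)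
            (hgr0mul _ _ hs₁g hi₂g)
        · -- product of two elements of span (range ιA)
          rw [hspanA] at hs₁ hs₂
          obtain ⟨a₁, rfl⟩ := hs₁
          obtain ⟨a₂, rfl⟩ := hs₂
          have e1 : (ι ∘ₗ LinearMap.inl ℂ A (ℕ →₀ B)) a₁ = ιA a₁ := by
            rw [hιA]; rfl
          have e2 : (ι ∘ₗ LinearMap.inl ℂ A (ℕ →₀ B)) a₂ = ιA a₂ := by
            rw [hιA]; rfl
          rw [e1, e2]
          have hsplit2 : ιA a₁ * ιA a₂ = ιA (a₁ * a₂) + (ιA a₁ * ιA a₂ - ιA (a₁ * a₂)) := by ring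
          rw [hsplit2]
          refine add_mem (Submodule.mem_sup_right (Submodule.subset_span ⟨_, rfl⟩)) ?_
          refine Submodule.mem_sup_left (Submodule.mem_inf.mpr ⟨?_, ?_⟩)
          · exact hmemIB _ (hmemE0 a₁ a₂)
          · exact sub_mem (hgr0mul _ _ (hgr0mem a₁) (hgr0mem a₂)) (hgr0mem (a₁ * a₂))
  -- part 4
  have part4 : (IB.restrictScalars ℂ ⊓ gr 0) ⊓ Submodule.span ℂ (Set.range ιA) = ⊥ := by
    rw [eq_bot_iff]
    intro x hx
    obtain ⟨⟨hxI, _⟩, hxA⟩ := Submodule.mem_inf.mp hx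
    rw [hspanA] at hxA
    obtain ⟨a, rfl⟩ := hxA
    have hx0 : g ((ι ∘ₗ LinearMap.inl ℂ A (ℕ →₀ B)) a) = 0 := hgIB _ hxI
    have e1 : (ι ∘ₗ LinearMap.inl ℂ A (ℕ →₀ B)) a = ιA a := by rw [hιA]; rfl
    rw [e1, hgιA] at hx0
    have ha : a = 0 := by
      have := congrArg TrivSqZeroExt.fst hx0
      rwa [TrivSqZeroExt.fst_inl, TrivSqZeroExt.fst_zero] at this
    rw [e1, ha, hιA]
    have : ((0:A), (0 : ℕ →₀ B)) = (0 : QC A B) := rfl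
    rw [this, map_zero]
    exact Submodule.zero_mem ⊥
  -- part 5
  have hBle : Submodule.span ℂ (Set.range ιB) ≤ gr 1 := by
    rw [Submodule.span_le]
    rintro _ ⟨b, rfl⟩
    rw [hgr1]
    rw [show ιB b = 1 * ιB b from (one_mul _).symm]
    exact Submodule.mul_mem_mul hgr0one (Submodule.subset_span ⟨b, rfl⟩)
  have part5 : (IB.restrictScalars ℂ ⊓ gr 1) ⊔ Submodule.span ℂ (Set.range ιB) = gr 1 := by
    apply le_antisymm
    · exact sup_le inf_le_right hBle
    · conv_lhs => rw [hgr1]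
      refine Submodule.mul_le.mpr ?_
      intro m hm n hn
      refine Submodule.span_induction
        (p := fun n _ => m * n ∈ (IB.restrictScalars ℂ ⊓ gr 1) ⊔ Submodule.span ℂ (Set.range ιB))
        ?_ ?_ ?_ ?_ hn
      · rintro _ ⟨b, rfl⟩
        rw [← part3] at hm
        obtain ⟨i, hi, s, hs, rfl⟩ := Submodule.mem_sup.mp hm
        have hiI : i ∈ IB := (Submodule.mem_inf.mp hi).1
        have hig : i ∈ gr 0 := (Submodule.mem_inf.mp hi).2
        rw [hspanA] at hs
        obtain ⟨a, rfl⟩ := hs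
        have e1 : (ι ∘ₗ LinearMap.inl ℂ A (ℕ →₀ B)) a = ιA a := by rw [hιA]; rfl
        rw [e1]
        have hsplit : (i + ιA a) * ιB b = i * ιB b + ιB (a • b) + (ιA a * ιB b - ιB (a • b)) := by
          ring
        rw [hsplit]
        have hιBgr1 : ∀ b' : B, ιB b' ∈ gr 1 := by
          intro b'
          rw [hgr1, show ιB b' = 1 * ιB b' from (one_mul _).symm]
          exact Submodule.mul_mem_mul hgr0one (Submodule.subset_span ⟨b', rfl⟩)
        refine add_mem (add_mem ?_ ?_) ?_
        · refine Submodule.mem_sup_left (Submodule.mem_inf.mpr ⟨?_, ?_⟩)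
          · exact Ideal.mul_mem_right _ _ hiI
          · rw [hgr1]
            exact Submodule.mul_mem_mul hig (Submodule.subset_span ⟨b, rfl⟩)
        · exact Submodule.mem_sup_right (Submodule.subset_span ⟨_, rfl⟩)
        · refine Submodule.mem_sup_left (Submodule.mem_inf.mpr ⟨?_, ?_⟩)
          · exact hmemIB _ (hmemE1 a b)
          · refine sub_mem ?_ (hιBgr1 _)
            rw [hgr1]
            exact Submodule.mul_mem_mul (hgr0mem a) (Submodule.subset_span ⟨b, rfl⟩)
      · show m * 0 ∈ _
        rw [mul_zero]; exact zero_mem _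
      · intro u v _ _ h1 h2
        show m * (u + v) ∈ _
        rw [mul_add]
        exact add_mem h1 h2
      · intro c u _ h1
        show m * (c • u) ∈ _
        rw [mul_smul_comm]
        exact Submodule.smul_mem _ _ h1
  -- part 6
  have part6 : (IB.restrictScalars ℂ ⊓ gr 1) ⊓ Submodule.span ℂ (Set.range ιB) = ⊥ := by
    rw [eq_bot_iff]
    intro x hx
    obtain ⟨⟨hxI, _⟩, hxB⟩ := Submodule.mem_inf.mp hx
    rw [hspanB] at hxB
    obtain ⟨b, rfl⟩ := hxB
    have e1 : (ι ∘ₗ (LinearMap.inr ℂ A (ℕ →₀ B)) ∘ₗ (Finsupp.lsingle 0)) b = ιB b := by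
      rw [hιB]; rfl
    have hx0 : g ((ι ∘ₗ (LinearMap.inr ℂ A (ℕ →₀ B)) ∘ₗ (Finsupp.lsingle 0)) b) = 0 :=
      hgIB _ hxI
    rw [e1, hgιB] at hx0
    have hb : b = 0 := by
      have := congrArg TrivSqZeroExt.snd hx0
      rwa [TrivSqZeroExt.snd_inr, TrivSqZeroExt.snd_zero] at this
    rw [e1, hb, hιB, Finsupp.single_zero]
    have : ((0:A), (0 : ℕ →₀ B)) = (0 : QC A B) := rfl
    rw [this, map_zero]
    exact Submodule.zero_mem ⊥
  exact ⟨part1, part2, part3, part4, part5, part6⟩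
end
end
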